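/- arXiv:math/0311439 — 10 statements merged into one kernel-verified Lean document; each statement's English description precedes it below -/
import Mathlib

section
/- Let 0 < c1 < c2 < A be real numbers and set θ = (c2 − c1)/(A − c1). Let a_1, …, a_N be real numbers with a_j ≤ A for every 1 ≤ j ≤ N and ∑_{j=1}^{N} a_j ≥ c2·N. Then there exist an integer l ≥ θ·N and integers 1 ≤ n_1 < n_2 < ⋯ < n_l ≤ N such that ∑_{j=n+1}^{n_i} a_j ≥ c1·(n_i − n) for every integer 0 ≤ n < n_i and every i = 1, …, l. -/
/-- **Pliss lemma.** Given `0 < c1 < c2 < A` and reals `a 1, …, a N` bounded above by `A`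
with `∑_{j=1}^N a j ≥ c2 * N`, there exist `l ≥ θ * N` (with `θ = (c2 - c1)/(A - c1)`)
and times `1 ≤ n 1 < ⋯ < n l ≤ N` such that `∑_{j=n+1}^{n i} a j ≥ c1 * (n i - n)`
for every `0 ≤ n < n i`. -/
theorem pliss_lemma (c1 c2 A : ℝ) (hc1 : 0 < c1) (hc12 : c1 < c2) (hc2A : c2 < A)
    (N : ℕ) (a : ℕ → ℝ) (ha : ∀ j, 1 ≤ j → j ≤ N → a j ≤ A)
    (hsum : c2 * N ≤ ∑ j ∈ Finset.Icc 1 N, a j) :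
    ∃ (l : ℕ) (n : Fin l → ℕ),
      (c2 - c1) / (A - c1) * N ≤ (l : ℝ) ∧
      StrictMono n ∧
      (∀ i, 1 ≤ n i ∧ n i ≤ N) ∧
      (∀ i, ∀ k, k < n i →
        c1 * ((n i : ℝ) - (k : ℝ)) ≤ ∑ j ∈ Finset.Icc (k + 1) (n i), a j) := by
  classical
  set S : ℕ → ℝ := fun n => ∑ j ∈ Finset.Ioc 0 n, (a j - c1) with hS
  set pred : ℕ → Prop := fun n => ∀ k < n, S k ≤ S n with hpred
  set P : ℕ → Finset ℕ := fun n => (Finset.Icc 1 n).filter pred with hP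
  have hA : (0:ℝ) < A - c1 := by linarith
  have hPmono : ∀ {m n : ℕ}, m ≤ n → P m ⊆ P n := by
    intro m n h
    exact Finset.filter_subset_filter _ (Finset.Icc_subset_Icc_right h)
  -- Key: running max of S up to n is bounded by #records * (A - c1)
  have key : ∀ n, n ≤ N → ∀ k, k ≤ n → S k ≤ (P n).card * (A - c1) := by
    intro n
    induction n with
    | zero =>
        intro _ k hk
        interval_cases k
        simp [hS]
        positivity
    | succ n ih =>
        intro hn k hk
        have hn' : n ≤ N := Nat.le_of_succ_le hn
        have hPcard : ((P n).card : ℝ) ≤ ((P (n+1)).card : ℝ) := by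
          exact_mod_cast Finset.card_le_card (hPmono (Nat.le_succ n))
        have hmono : ∀ k', k' ≤ n → S k' ≤ (P (n+1)).card * (A - c1) := by
          intro k' hk'
          exact le_trans (ih hn' k' hk')
            (mul_le_mul_of_nonneg_right hPcard hA.le)
        rcases Nat.lt_succ_iff_lt_or_eq.mp (Nat.lt_succ_of_le hk) with h | h
        · exact hmono k (Nat.lt_succ_iff.mp h)
        · subst h
          by_cases hp : pred (n+1)
          · have hmem : (n+1) ∈ P (n+1) := by
              simp only [hP, Finset.mem_filter, Finset.mem_Icc]
              exact ⟨⟨Nat.one_le_iff_ne_zero.mpr (Nat.succ_ne_zero n), le_rfl⟩, hp⟩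
            have hnotmem : (n+1) ∉ P n := by
              simp only [hP, Finset.mem_filter, Finset.mem_Icc]
              intro h
              omega
            have hcard : (P n).card + 1 ≤ (P (n+1)).card := by
              have : insert (n+1) (P n) ⊆ P (n+1) :=
                Finset.insert_subset hmem (hPmono (Nat.le_succ n))
              calc (P n).card + 1 = (insert (n+1) (P n)).card := by
                    rw [Finset.card_insert_of_notMem hnotmem]
                _ ≤ (P (n+1)).card := Finset.card_le_card this
            have hstep : S (n+1) = S n + (a (n+1) - c1) := by
              simp only [hS]
              rw [Finset.sum_Ioc_succ_top (Nat.zero_le n)]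
            have haA : a (n+1) ≤ A := ha (n+1) (Nat.succ_le_succ (Nat.zero_le n)) hn
            have hSn : S n ≤ (P n).card * (A - c1) := ih hn' n le_rfl
            have hcard' : ((P n).card : ℝ) + 1 ≤ ((P (n+1)).card : ℝ) := by
              exact_mod_cast hcard
            nlinarith [hA]
          · simp only [hpred] at hp
            push_neg at hp
            obtain ⟨k', hk', hSk'⟩ := hp
            exact le_trans hSk'.le (hmono k' (Nat.lt_succ_iff.mp hk'))
  -- S N ≥ (c2 - c1) * N
  have hIcc : Finset.Icc 1 N = Finset.Ioc 0 N := by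
    rw [← Finset.Icc_add_one_left_eq_Ioc, zero_add]
  have hSN : (c2 - c1) * N ≤ S N := by
    have : S N = (∑ j ∈ Finset.Icc 1 N, a j) - c1 * N := by
      simp only [hS, hIcc, Finset.sum_sub_distrib, Finset.sum_const,
        Nat.card_Ioc, Nat.sub_zero, nsmul_eq_mul]
      ring
    rw [this]
    linarith
  set l := (P N).card with hl
  have hbound : S N ≤ l * (A - c1) := key N le_rfl N le_rfl
  refine ⟨l, fun i => (P N).orderEmbOfFin rfl i, ?_, ?_, ?_, ?_⟩
  · rw [div_mul_eq_mul_div, div_le_iff₀ hA]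
    calc (c2 - c1) * N ≤ S N := hSN
      _ ≤ l * (A - c1) := hbound
  · exact ((P N).orderEmbOfFin rfl).strictMono
  · intro i
    have := (P N).orderEmbOfFin_mem rfl i
    simp only [hP, Finset.mem_filter, Finset.mem_Icc] at this
    exact this.1
  · intro i k hk
    have hmem := (P N).orderEmbOfFin_mem rfl i
    simp only [hP, Finset.mem_filter, Finset.mem_Icc] at hmem
    set m := (P N).orderEmbOfFin rfl i with hm
    have hpredm : ∀ k' < m, S k' ≤ S m := hmem.2
    have hkm : k ≤ m := hk.le
    have hsplit : S k + ∑ j ∈ Finset.Ioc k m, (a j - c1) = S m := by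
      simp only [hS]
      exact Finset.sum_Ioc_consecutive _ (Nat.zero_le k) hkm
    have h1 : (0:ℝ) ≤ ∑ j ∈ Finset.Ioc k m, (a j - c1) := by
      have := hpredm k hk
      linarith
    have h2 : ∑ j ∈ Finset.Ioc k m, (a j - c1)
        = (∑ j ∈ Finset.Icc (k+1) m, a j) - c1 * ((m:ℝ) - (k:ℝ)) := by
      rw [Finset.Icc_add_one_left_eq_Ioc, Finset.sum_sub_distrib, Finset.sum_const,
        Nat.card_Ioc, nsmul_eq_mul, Nat.cast_sub hkm]
      ring
    rw [h2] at h1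
    linarith
end

section
/- Let 0 < c1 < c2 < A and 0 < c1' < c2' < A' be real numbers, set θ1 = (c2 − c1)/(A − c1) and θ2 = (c2' − c1')/(A' − c1'), and assume θ1 + θ2 > 1. Let a_1, …, a_N and a'_1, …, a'_N be real numbers with a_j ≤ A, a'_j ≤ A' for all 1 ≤ j ≤ N, ∑_{j=1}^{N} a_j ≥ c2·N and ∑_{j=1}^{N} a'_j ≥ c2'·N. Then there exist an integer l ≥ (θ1 + θ2 − 1)·N and integers 1 ≤ n_1 < ⋯ < n_l ≤ N such that for every i = 1, …, l and every integer 0 ≤ n < n_i one has simultaneously ∑_{j=n+1}^{n_i} a_j ≥ c1·(n_i − n) and ∑_{j=n+1}^{n_i} a'_j ≥ c1'·(n_i − n). -/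
open Finset

/-- Pliss property at time `n` for slope `c1` and sequence `a`. -/
def PlissAt (c1 : ℝ) (a : ℕ → ℝ) (n : ℕ) : Prop :=
  ∀ k, k < n → c1 * ((n : ℝ) - (k : ℝ)) ≤ ∑ j ∈ Finset.Icc (k + 1) n, a j

noncomputable instance (c1 : ℝ) (a : ℕ → ℝ) : DecidablePred (PlissAt c1 a) :=
  Classical.decPred _

private lemma sum_Ioc_split (a : ℕ → ℝ) {k n : ℕ} (h : k ≤ n) :
    ∑ j ∈ Ioc k n, a j = (∑ j ∈ Ioc 0 n, a j) - ∑ j ∈ Ioc 0 k, a j := by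
  have := Finset.sum_Ioc_consecutive a (Nat.zero_le k) h
  linarith

private lemma pliss_card (c1 c2 A : ℝ) (hc1A : c1 < A) (N : ℕ) (a : ℕ → ℝ)
    (ha : ∀ j, 1 ≤ j → j ≤ N → a j ≤ A)
    (hsum : c2 * N ≤ ∑ j ∈ Icc 1 N, a j) :
    (c2 - c1) / (A - c1) * N ≤
      (((Icc 1 N).filter (fun n => PlissAt c1 a n)).card : ℝ) := by
  classical
  set T : ℕ → ℝ := fun m => (∑ j ∈ Ioc 0 m, a j) - c1 * m with hT
  have key : ∀ k n : ℕ, k < n →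
      ((c1 * ((n : ℝ) - k) ≤ ∑ j ∈ Icc (k + 1) n, a j) ↔ T k ≤ T n) := by
    intro k n hk
    rw [Finset.Icc_add_one_left_eq_Ioc, sum_Ioc_split a hk.le]
    simp only [hT]
    constructor <;> intro h <;> nlinarith
  have hPliss : ∀ n, PlissAt c1 a n ↔ ∀ k, k < n → T k ≤ T n := by
    intro n
    constructor
    · intro h k hk; exact (key k n hk).mp (h k hk)
    · intro h k hk; exact (key k n hk).mpr (h k hk)
  set G : ℕ → Finset ℕ := fun n => (Icc 1 n).filter (fun m => PlissAt c1 a m) with hG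
  let M : ℕ → ℝ := fun n => Nat.rec (T 0) (fun m Mm => max Mm (T (m + 1))) n
  have hM0 : M 0 = T 0 := rfl
  have hMs : ∀ n, M (n + 1) = max (M n) (T (n + 1)) := fun n => rfl
  have hTM : ∀ n k, k ≤ n → T k ≤ M n := by
    intro n
    induction n with
    | zero => intro k hk; interval_cases k; simp [hM0]
    | succ m ih =>
      intro k hk
      rcases Nat.lt_succ_iff_lt_or_eq.mp (Nat.lt_succ_of_le hk) with h | h
      · exact le_trans (ih k (Nat.lt_succ_iff.mp h)) (by rw [hMs]; exact le_max_left _ _)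
      · rw [h, hMs]; exact le_max_right _ _
  have hApos : (0 : ℝ) < A - c1 := by linarith
  have main : ∀ n, n ≤ N → M n ≤ (A - c1) * ((G n).card : ℝ) := by
    intro n
    induction n with
    | zero =>
      intro _
      have : T 0 = 0 := by simp [hT]
      simp [hM0, this, hG]
    | succ m ih =>
      intro hm
      have hm' : m ≤ N := Nat.le_of_succ_le hm
      have ihm := ih hm'
      have hTstep : T (m + 1) = T m + (a (m + 1) - c1) := by
        simp only [hT]
        rw [Finset.sum_Ioc_succ_top (Nat.zero_le m)]
        push_cast
        ring
      have hGsub : (G m).card ≤ (G (m + 1)).card := by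
        apply Finset.card_le_card
        apply Finset.filter_subset_filter
        exact Finset.Icc_subset_Icc_right (Nat.le_succ m)
      by_cases hp : PlissAt c1 a (m + 1)
      · have hcard : (G (m + 1)).card = (G m).card + 1 := by
          have : G (m + 1) = insert (m + 1) (G m) := by
            simp only [hG]
            ext x
            simp only [Finset.mem_insert, Finset.mem_filter, Finset.mem_Icc]
            constructor
            · rintro ⟨⟨hx1, hx2⟩, hx⟩
              rcases eq_or_lt_of_le hx2 with h | h
              · exact Or.inl h
              · exact Or.inr ⟨⟨hx1, Nat.lt_succ_iff.mp h⟩, hx⟩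
            · rintro (rfl | ⟨⟨hx1, hx2⟩, hx⟩)
              · exact ⟨⟨Nat.succ_le_succ (Nat.zero_le m), le_rfl⟩, hp⟩
              · exact ⟨⟨hx1, Nat.le_succ_of_le hx2⟩, hx⟩
          rw [this, Finset.card_insert_of_notMem]
          simp only [hG, Finset.mem_filter, Finset.mem_Icc]
          intro h
          omega
        have h1 : T (m + 1) ≤ M m + (A - c1) := by
          have := hTM m m le_rfl
          have ham := ha (m + 1) (Nat.succ_le_succ (Nat.zero_le m)) hm
          linarith [hTstep]
        rw [hMs, hcard]
        push_cast
        rw [max_le_iff]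
        constructor <;> nlinarith
      · obtain ⟨k, hk, hTk⟩ : ∃ k, k < m + 1 ∧ ¬ T k ≤ T (m + 1) := by
          by_contra h
          push_neg at h
          exact hp ((hPliss (m + 1)).mpr h)
        push_neg at hTk
        have : T (m + 1) ≤ M m := le_trans hTk.le (hTM m k (Nat.lt_succ_iff.mp hk))
        rw [hMs, max_le_iff]
        constructor
        · calc M m ≤ (A - c1) * ((G m).card : ℝ) := ihm
            _ ≤ (A - c1) * ((G (m + 1)).card : ℝ) := by
              apply mul_le_mul_of_nonneg_left _ hApos.le
              exact_mod_cast hGsub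
        · calc T (m + 1) ≤ M m := this
            _ ≤ (A - c1) * ((G m).card : ℝ) := ihm
            _ ≤ (A - c1) * ((G (m + 1)).card : ℝ) := by
              apply mul_le_mul_of_nonneg_left _ hApos.le
              exact_mod_cast hGsub
  have hTN : (c2 - c1) * N ≤ T N := by
    simp only [hT]
    have : Icc 1 N = Ioc 0 N := Finset.Icc_add_one_left_eq_Ioc 0 N
    rw [this] at hsum
    nlinarith
  have hMN := main N le_rfl
  have hTMN := hTM N N le_rfl
  rw [div_mul_eq_mul_div, div_le_iff₀ hApos]
  calc (c2 - c1) * N ≤ T N := hTN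
    _ ≤ M N := hTMN
    _ ≤ (A - c1) * ((G N).card : ℝ) := hMN
    _ = ((G N).card : ℝ) * (A - c1) := by ring

/-- **Simultaneous Pliss times.** Given two Pliss configurations with
`θ1 = (c2 - c1)/(A - c1)`, `θ2 = (c2' - c1')/(A' - c1')` and `θ1 + θ2 > 1`,
there are at least `(θ1 + θ2 - 1) * N` common times `1 ≤ n 1 < ⋯ < n l ≤ N` at which
both Pliss inequalities hold simultaneously. -/
theorem simultaneous_pliss (c1 c2 A c1' c2' A' : ℝ)
    (hc1 : 0 < c1) (hc12 : c1 < c2) (hc2A : c2 < A)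
    (hc1' : 0 < c1') (hc12' : c1' < c2') (hc2A' : c2' < A')
    (hθ : 1 < (c2 - c1) / (A - c1) + (c2' - c1') / (A' - c1'))
    (N : ℕ) (a a' : ℕ → ℝ)
    (ha : ∀ j, 1 ≤ j → j ≤ N → a j ≤ A) (ha' : ∀ j, 1 ≤ j → j ≤ N → a' j ≤ A')
    (hsum : c2 * N ≤ ∑ j ∈ Finset.Icc 1 N, a j)
    (hsum' : c2' * N ≤ ∑ j ∈ Finset.Icc 1 N, a' j) :
    ∃ (l : ℕ) (n : Fin l → ℕ),
      ((c2 - c1) / (A - c1) + (c2' - c1') / (A' - c1') - 1) * N ≤ (l : ℝ) ∧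
      StrictMono n ∧
      (∀ i, 1 ≤ n i ∧ n i ≤ N) ∧
      (∀ i, ∀ k, k < n i →
        c1 * ((n i : ℝ) - (k : ℝ)) ≤ ∑ j ∈ Finset.Icc (k + 1) (n i), a j ∧
        c1' * ((n i : ℝ) - (k : ℝ)) ≤ ∑ j ∈ Finset.Icc (k + 1) (n i), a' j) := by
  classical
  set G := (Icc 1 N).filter (fun n => PlissAt c1 a n) with hGdef
  set G' := (Icc 1 N).filter (fun n => PlissAt c1' a' n) with hG'def
  have h1 := pliss_card c1 c2 A (lt_trans hc12 hc2A) N a ha hsum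
  have h2 := pliss_card c1' c2' A' (lt_trans hc12' hc2A') N a' ha' hsum'
  set s := G ∩ G' with hsdef
  have hunion : (G ∪ G').card ≤ N := by
    calc (G ∪ G').card ≤ (Icc 1 N).card := by
          apply Finset.card_le_card
          apply Finset.union_subset <;> exact Finset.filter_subset _ _
      _ = N := by rw [Nat.card_Icc]; omega
  have hinter : G.card + G'.card = (G ∪ G').card + s.card :=
    (Finset.card_union_add_card_inter G G').symm
  have hcard : ((c2 - c1) / (A - c1) + (c2' - c1') / (A' - c1') - 1) * N ≤ (s.card : ℝ) := by
    have e1 : (G.card : ℝ) + G'.card = ((G ∪ G').card : ℝ) + s.card := by exact_mod_cast hinter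
    have e2 : ((G ∪ G').card : ℝ) ≤ N := by exact_mod_cast hunion
    nlinarith
  refine ⟨s.card, fun i => s.orderEmbOfFin rfl i, hcard, ?_, ?_, ?_⟩
  · exact (s.orderEmbOfFin rfl).strictMono
  · intro i
    have h0 := Finset.orderEmbOfFin_mem s rfl i
    have h1 := Finset.mem_inter.mp h0
    have h2 := (Finset.mem_filter.mp h1.1).1
    have h3 := Finset.mem_Icc.mp h2
    exact h3
  · intro i k hk
    have h0 := Finset.orderEmbOfFin_mem s rfl i
    have h1 := Finset.mem_inter.mp h0
    exact ⟨(Finset.mem_filter.mp h1.1).2 k hk, (Finset.mem_filter.mp h1.2).2 k hk⟩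
end

section
/- Let (M, m) be a finite measure space, let (H_j)_{j ≥ 1} be a sequence of measurable subsets of M, let θ > 0, and let A ⊆ M be a measurable set with m(A) > 0 such that for every x ∈ A there exists N(x) ∈ ℕ with #{1 ≤ j ≤ n : x ∈ H_j} ≥ θ·n for every n ≥ N(x). Then there exists n_0 ∈ ℕ such that for every n ≥ n_0 one has (1/n)·∑_{j=1}^{n} m(A ∩ H_j) ≥ (θ/2)·m(A). -/
open MeasureTheory
open scoped Classical ENNReal NNReal

/-- If almost every point of a set `A` of positive measure has frequency of times `j`
with `x ∈ H j` at least `θ`, then for all large `n` the averaged measures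
`(1/n) ∑_{j=1}^n m (A ∩ H j)` are at least `(θ/2) m A`. -/
theorem freq_hyperbolic_times {M : Type*} [MeasurableSpace M]
    (m : Measure M) [IsFiniteMeasure m]
    (H : ℕ → Set M) (hH : ∀ j, MeasurableSet (H j))
    (θ : ℝ) (hθ : 0 < θ)
    (A : Set M) (hA : MeasurableSet A) (hApos : 0 < m A)
    (hfreq : ∀ x ∈ A, ∃ N : ℕ, ∀ n, N ≤ n →
      θ * (n : ℝ) ≤ (((Finset.Icc 1 n).filter fun j => x ∈ H j).card : ℝ)) :
    ∃ n₀ : ℕ, ∀ n, n₀ ≤ n →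
      (θ / 2) * (m A).toReal ≤ (1 / (n : ℝ)) * ∑ j ∈ Finset.Icc 1 n, (m (A ∩ H j)).toReal := by
  set f : ℕ → M → ℝ := fun n x => (((Finset.Icc 1 n).filter fun j => x ∈ H j).card : ℝ) with hf
  have hfmeas : ∀ n, Measurable (f n) := by
    intro n
    have hfe : f n = fun x => ∑ j ∈ Finset.Icc 1 n,
        Set.indicator (H j) (fun _ => (1:ℝ)) x := by
      funext x
      simp only [hf, Finset.card_filter, Nat.cast_sum, Set.indicator_apply,
        Nat.cast_ite, Nat.cast_one, Nat.cast_zero]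
    rw [hfe]
    exact Finset.measurable_sum _ fun j _ => measurable_const.indicator (hH j)
  set B : ℕ → Set M := fun N => A ∩ {x | ∀ n, N ≤ n → θ * n ≤ f n x} with hB
  have hBsub : ∀ N, B N ⊆ A := fun N => Set.inter_subset_left
  have hBmeas : ∀ N, MeasurableSet (B N) := by
    intro N
    apply hA.inter
    have : {x | ∀ n, N ≤ n → θ * n ≤ f n x}
        = ⋂ n, ⋂ _ : N ≤ n, {x | θ * n ≤ f n x} := by
      ext x; simp
    rw [this]
    exact MeasurableSet.iInter fun n => MeasurableSet.iInter fun _ =>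
      measurableSet_le measurable_const (hfmeas n)
  have hBmono : Monotone B := fun N N' h x hx => ⟨hx.1, fun n hn => hx.2 n (h.trans hn)⟩
  have hBunion : (⋃ N, B N) = A := by
    apply Set.Subset.antisymm (Set.iUnion_subset hBsub)
    intro x hx
    obtain ⟨N, hN⟩ := hfreq x hx
    exact Set.mem_iUnion.2 ⟨N, hx, hN⟩
  have htend : Filter.Tendsto (fun N => m (B N)) Filter.atTop (nhds (m A)) := by
    rw [← hBunion]
    exact tendsto_measure_iUnion_atTop hBmono
  have hhalf : m A / 2 < m A := ENNReal.half_lt_self hApos.ne' (measure_ne_top m A)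
  obtain ⟨N, hN⟩ := (htend.eventually (eventually_gt_nhds hhalf)).exists
  refine ⟨max N 1, fun n hn => ?_⟩
  have hNn : N ≤ n := le_trans (le_max_left _ _) hn
  have hn1 : 1 ≤ n := le_trans (le_max_right _ _) hn
  have hnpos : (0:ℝ) < n := by exact_mod_cast Nat.lt_of_lt_of_le Nat.zero_lt_one hn1
  -- key ENNReal estimate
  have key : ENNReal.ofReal (θ * n) * m (B N) ≤ ∑ j ∈ Finset.Icc 1 n, m (A ∩ H j) := by
    have step1 : ∀ j, m (B N ∩ H j) ≤ m (A ∩ H j) := fun j =>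
      measure_mono (Set.inter_subset_inter_left _ (hBsub N))
    have step2 : ∀ j, m (B N ∩ H j)
        = ∫⁻ x in B N, Set.indicator (H j) (fun _ => (1:ℝ≥0∞)) x ∂m := by
      intro j
      rw [lintegral_indicator_const (hH j), one_mul, Measure.restrict_apply (hH j),
        Set.inter_comm]
    have step3 : ∑ j ∈ Finset.Icc 1 n, m (B N ∩ H j)
        = ∫⁻ x in B N, ∑ j ∈ Finset.Icc 1 n,
            Set.indicator (H j) (fun _ => (1:ℝ≥0∞)) x ∂m := by
      rw [lintegral_finset_sum _ fun j _ => measurable_const.indicator (hH j)]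
      exact Finset.sum_congr rfl fun j _ => step2 j
    have step4 : ENNReal.ofReal (θ * n) * m (B N)
        ≤ ∫⁻ x in B N, ∑ j ∈ Finset.Icc 1 n,
            Set.indicator (H j) (fun _ => (1:ℝ≥0∞)) x ∂m := by
      rw [← setLIntegral_const (B N) (ENNReal.ofReal (θ * n))]
      apply setLIntegral_mono (Finset.measurable_sum _ fun j _ =>
        measurable_const.indicator (hH j))
      intro x hx
      have hcount : θ * n ≤ f n x := hx.2 n hNn
      have hsum : ∑ j ∈ Finset.Icc 1 n, Set.indicator (H j) (fun _ => (1:ℝ≥0∞)) x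
          = ((((Finset.Icc 1 n).filter fun j => x ∈ H j).card : ℕ) : ℝ≥0∞) := by
        simp only [Set.indicator_apply, Finset.card_filter, Nat.cast_sum, Nat.cast_ite,
          Nat.cast_one, Nat.cast_zero]
      rw [hsum]
      calc ENNReal.ofReal (θ * n) ≤ ENNReal.ofReal (f n x) := ENNReal.ofReal_le_ofReal hcount
        _ = _ := by
            simp only [hf]
            exact ENNReal.ofReal_natCast _
    calc ENNReal.ofReal (θ * n) * m (B N)
        ≤ ∑ j ∈ Finset.Icc 1 n, m (B N ∩ H j) := by rw [step3]; exact step4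
      _ ≤ ∑ j ∈ Finset.Icc 1 n, m (A ∩ H j) := Finset.sum_le_sum fun j _ => step1 j
  have key2 : ENNReal.ofReal (θ * n) * (m A / 2) ≤ ∑ j ∈ Finset.Icc 1 n, m (A ∩ H j) :=
    le_trans (mul_le_mul_right hN.le _) key
  -- pass to reals
  have hfin : (∑ j ∈ Finset.Icc 1 n, m (A ∩ H j)) ≠ ∞ :=
    (ENNReal.sum_lt_top.2 fun j _ => measure_lt_top m _).ne
  have hreal : θ * n * ((m A).toReal / 2) ≤ ∑ j ∈ Finset.Icc 1 n, (m (A ∩ H j)).toReal := by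
    have := ENNReal.toReal_mono hfin key2
    rw [ENNReal.toReal_mul, ENNReal.toReal_ofReal (by positivity),
      ENNReal.toReal_div, ENNReal.toReal_sum (fun j _ => measure_ne_top m _)] at this
    simpa using this
  have h2 : (1 / (n:ℝ)) * (θ * n * ((m A).toReal / 2))
      ≤ (1 / (n:ℝ)) * ∑ j ∈ Finset.Icc 1 n, (m (A ∩ H j)).toReal :=
    mul_le_mul_of_nonneg_left hreal (by positivity)
  calc (θ / 2) * (m A).toReal = (1 / (n:ℝ)) * (θ * n * ((m A).toReal / 2)) := by
        field_simp
    _ ≤ _ := h2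
end

section
/- Let (M, m) be a finite measure space and let (Δ_n)_{n ≥ 0}, (A_n)_{n ≥ 0}, (B_n)_{n ≥ 0}, (R_n)_{n ≥ 1} be measurable subsets of M such that for every n ≥ 1: Δ_n = Δ_{n−1} \ R_n, and Δ_n is the disjoint union of A_n and B_n. Assume there is an integer R_0 ≥ 1 such that B_n = ∅, R_n = ∅ and A_n = Δ_n = Δ_0 for all n ≤ R_0. Let a_0, b_0, c_0 > 0 with b_0 + c_0 < 1 be constants such that for every n ≥ 1: m(B_{n−1} ∩ A_n) ≥ a_0·m(B_{n−1}), m(A_{n−1} ∩ B_n) ≤ b_0·m(A_{n−1}), and m(A_{n−1} ∩ R_n) ≤ c_0·m(A_{n−1}). Then, with a_1 = ((1 + a_0)·b_0 + c_0)/(a_0·(1 − b_0 − c_0)), one has m(B_n) ≤ a_1·m(A_n) for every n ≥ 1. -/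
open MeasureTheory

lemma key_alg (a0 b0 c0 x y : ℝ) (ha : 0 < a0)
    (hb : 0 < b0) (hc : 0 < c0) (hbc : b0 + c0 < 1) (hx : 0 ≤ x) (hy : 0 ≤ y)
    (hyx : y ≤ ((1 + a0) * b0 + c0) / (a0 * (1 - b0 - c0)) * x) :
    b0 * x + (1 - a0) * y ≤
      ((1 + a0) * b0 + c0) / (a0 * (1 - b0 - c0)) * ((1 - b0 - c0) * x + a0 * y) := by
  have hD : 0 < 1 - b0 - c0 := by linarith
  have hden : 0 < a0 * (1 - b0 - c0) := by positivity
  have hyx' : y * (a0 * (1 - b0 - c0)) ≤ ((1 + a0) * b0 + c0) * x := by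
    rw [div_mul_eq_mul_div, le_div_iff₀ hden] at hyx; exact hyx
  rw [div_mul_eq_mul_div, le_div_iff₀ hden]
  rcases le_or_gt ((1 - a0) * (1 - b0 - c0)) ((1 + a0) * b0 + c0) with hcase | hcase
  · have h1 : (1 - a0) * (1 - b0 - c0) * y ≤ ((1 + a0) * b0 + c0) * y :=
      mul_le_mul_of_nonneg_right hcase hy
    have h2 : b0 * a0 ≤ (1 + a0) * b0 + c0 := by nlinarith
    nlinarith [mul_le_mul_of_nonneg_right h1 ha.le,
      mul_le_mul_of_nonneg_right h2 (mul_nonneg hD.le hx)]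
  · have hcpos : 0 ≤ (1 - a0) * (1 - b0 - c0) - ((1 + a0) * b0 + c0) := by linarith
    have hmul := mul_le_mul_of_nonneg_left hyx' hcpos
    have hN : 0 < (1 + a0) * b0 + c0 := by nlinarith
    have t1 : a0 * (1 - b0 - c0) ^ 2 ≤ a0 * (1 - c0) := by
      nlinarith [mul_nonneg ha.le (mul_nonneg hD.le (show (0:ℝ) ≤ 1 - (1 - b0 - c0) by linarith)),
        mul_nonneg ha.le hb.le]
    have hs : b0 * a0 * (1 - b0 - c0) ^ 2 + ((1 + a0) * b0 + c0) * (1 - a0) * (1 - b0 - c0)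
        - ((1 + a0) * b0 + c0) ^ 2 ≤ ((1 + a0) * b0 + c0) * (1 - b0 - c0) ^ 2 := by
      nlinarith [mul_le_mul_of_nonneg_left t1 hb.le,
        mul_le_mul_of_nonneg_right (show b0 ≤ (1 + a0) * b0 + c0 by nlinarith)
          (show (0:ℝ) ≤ a0 * (1 - c0) by nlinarith),
        mul_nonneg hN.le (sq_nonneg (b0 + c0))]
    nlinarith [mul_le_mul_of_nonneg_right hs (mul_nonneg ha.le hx), hmul, mul_pos hden hden,
      mul_nonneg ha.le hx, mul_nonneg ha.le hy]

/-- Abstract metric estimate for the inductive Markov partition construction: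
under the relations (m₂), (m₃) one has `m (B n) ≤ a1 * m (A n)` for every `n ≥ 1`,
with `a1 = ((1 + a0) * b0 + c0) / (a0 * (1 - b0 - c0))`. -/
theorem measure_B_le_A {M : Type*} [MeasurableSpace M]
    (m : Measure M) [IsFiniteMeasure m]
    (Δ A B : ℕ → Set M) (R : ℕ → Set M)
    (hΔmeas : ∀ n, MeasurableSet (Δ n)) (hAmeas : ∀ n, MeasurableSet (A n))
    (hBmeas : ∀ n, MeasurableSet (B n)) (hRmeas : ∀ n, MeasurableSet (R n))
    (hΔ : ∀ n, 1 ≤ n → Δ n = Δ (n - 1) \ R n)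
    (hunion : ∀ n, 1 ≤ n → Δ n = A n ∪ B n)
    (hdisj : ∀ n, 1 ≤ n → A n ∩ B n = ∅)
    (R₀ : ℕ) (hR₀ : 1 ≤ R₀)
    (hinit : ∀ n, n ≤ R₀ → B n = ∅ ∧ A n = Δ 0 ∧ Δ n = Δ 0)
    (hinitR : ∀ n, 1 ≤ n → n ≤ R₀ → R n = ∅)
    (a0 b0 c0 : ℝ) (ha0 : 0 < a0) (hb0 : 0 < b0) (hc0 : 0 < c0) (hbc : b0 + c0 < 1)
    (hm2 : ∀ n, 1 ≤ n → a0 * (m (B (n - 1))).toReal ≤ (m (B (n - 1) ∩ A n)).toReal)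
    (hm3 : ∀ n, 1 ≤ n → (m (A (n - 1) ∩ B n)).toReal ≤ b0 * (m (A (n - 1))).toReal)
    (hm3' : ∀ n, 1 ≤ n → (m (A (n - 1) ∩ R n)).toReal ≤ c0 * (m (A (n - 1))).toReal) :
    ∀ n, 1 ≤ n →
      (m (B n)).toReal ≤
        (((1 + a0) * b0 + c0) / (a0 * (1 - b0 - c0))) * (m (A n)).toReal := by
  have hD : 0 < 1 - b0 - c0 := by linarith
  have ha1 : 0 < ((1 + a0) * b0 + c0) / (a0 * (1 - b0 - c0)) := by positivity
  have hfin : ∀ s : Set M, m s ≠ ⊤ := fun s => (measure_lt_top m s).ne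
  -- basic set inclusions
  have hAeq : A 0 = Δ 0 := (hinit 0 (Nat.zero_le _)).2.1
  have hB0 : B 0 = ∅ := (hinit 0 (Nat.zero_le _)).1
  have hΔsub : ∀ k, Δ k ⊆ A k ∪ B k := by
    intro k
    rcases Nat.eq_zero_or_pos k with rfl | hk
    · intro x hx; left; rw [hAeq]; exact hx
    · rw [hunion k hk]
  have hAsub : ∀ k, A k ⊆ Δ k := by
    intro k
    rcases Nat.eq_zero_or_pos k with rfl | hk
    · rw [hAeq]
    · rw [hunion k hk]; exact Set.subset_union_left
  have hBsub : ∀ k, B k ⊆ Δ k := by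
    intro k
    rcases Nat.eq_zero_or_pos k with rfl | hk
    · rw [hB0]; exact Set.empty_subset _
    · rw [hunion k hk]; exact Set.subset_union_right
  have hAB : ∀ k, A k ∩ B k = ∅ := by
    intro k
    rcases Nat.eq_zero_or_pos k with rfl | hk
    · rw [hB0, Set.inter_empty]
    · exact hdisj k hk
  -- the main induction
  have main : ∀ n, (m (B n)).toReal ≤
      (((1 + a0) * b0 + c0) / (a0 * (1 - b0 - c0))) * (m (A n)).toReal := by
    intro n
    induction n with
    | zero =>
      rw [hB0]
      simp only [measure_empty, ENNReal.toReal_zero]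
      positivity
    | succ n IH =>
      have hΔstep : Δ (n + 1) = Δ n \ R (n + 1) := by
        have := hΔ (n + 1) (by omega); simpa using this
      have h1 : B (n + 1) ⊆ (A n ∩ B (n + 1)) ∪ (B n ∩ B (n + 1)) := by
        intro x hx
        have hxΔ : x ∈ Δ n := by
          have := hBsub (n + 1) hx
          rw [hΔstep] at this
          exact this.1
        rcases hΔsub n hxΔ with hxa | hxb
        · exact Or.inl ⟨hxa, hx⟩
        · exact Or.inr ⟨hxb, hx⟩
      have h2 : A n ⊆ (A n ∩ A (n + 1)) ∪ (A n ∩ B (n + 1)) ∪ (A n ∩ R (n + 1)) := by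
        intro x hx
        by_cases hxR : x ∈ R (n + 1)
        · exact Or.inr ⟨hx, hxR⟩
        · have hxΔ : x ∈ Δ (n + 1) := by
            rw [hΔstep]; exact ⟨hAsub n hx, hxR⟩
          rcases hΔsub (n + 1) hxΔ with hxa | hxb
          · exact Or.inl (Or.inl ⟨hx, hxa⟩)
          · exact Or.inl (Or.inr ⟨hx, hxb⟩)
      -- measure estimates
      have e1 : (m (B (n + 1))).toReal ≤
          (m (A n ∩ B (n + 1))).toReal + (m (B n ∩ B (n + 1))).toReal := by
        rw [← ENNReal.toReal_add (hfin _) (hfin _)]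
        exact ENNReal.toReal_mono (ENNReal.add_ne_top.mpr ⟨hfin _, hfin _⟩)
          ((measure_mono h1).trans (measure_union_le _ _))
      have e2 : (m (B n ∩ A (n + 1))).toReal + (m (B n ∩ B (n + 1))).toReal ≤
          (m (B n)).toReal := by
        rw [← ENNReal.toReal_add (hfin _) (hfin _)]
        apply ENNReal.toReal_mono (hfin _)
        have hd : Disjoint (B n ∩ A (n + 1)) (B n ∩ B (n + 1)) := by
          rw [Set.disjoint_left]
          intro x hx1 hx2
          have : x ∈ A (n + 1) ∩ B (n + 1) := ⟨hx1.2, hx2.2⟩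
          rw [hdisj (n + 1) (by omega)] at this
          exact this
        rw [← measure_union hd ((hBmeas n).inter (hBmeas (n + 1)))]
        exact measure_mono (by
          intro x hx
          rcases hx with hx | hx
          · exact hx.1
          · exact hx.1)
      have e3 : (m (A n ∩ A (n + 1))).toReal + (m (B n ∩ A (n + 1))).toReal ≤
          (m (A (n + 1))).toReal := by
        rw [← ENNReal.toReal_add (hfin _) (hfin _)]
        apply ENNReal.toReal_mono (hfin _)
        have hd : Disjoint (A n ∩ A (n + 1)) (B n ∩ A (n + 1)) := by
          rw [Set.disjoint_left]
          intro x hx1 hx2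
          have : x ∈ A n ∩ B n := ⟨hx1.1, hx2.1⟩
          rw [hAB n] at this
          exact this
        rw [← measure_union hd ((hBmeas n).inter (hAmeas (n + 1)))]
        exact measure_mono (by
          intro x hx
          rcases hx with hx | hx
          · exact hx.2
          · exact hx.2)
      have e4 : (m (A n)).toReal ≤ (m (A n ∩ A (n + 1))).toReal +
          (m (A n ∩ B (n + 1))).toReal + (m (A n ∩ R (n + 1))).toReal := by
        rw [← ENNReal.toReal_add (hfin _) (hfin _), ← ENNReal.toReal_add
          (ENNReal.add_ne_top.mpr ⟨hfin _, hfin _⟩) (hfin _)]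
        refine ENNReal.toReal_mono (by
          exact ENNReal.add_ne_top.mpr ⟨ENNReal.add_ne_top.mpr ⟨hfin _, hfin _⟩, hfin _⟩) ?_
        exact (measure_mono h2).trans ((measure_union_le _ _).trans
          (add_le_add_left (measure_union_le _ _) _))
      have hm2n := hm2 (n + 1) (by omega)
      have hm3n := hm3 (n + 1) (by omega)
      have hm3'n := hm3' (n + 1) (by omega)
      simp only [Nat.add_sub_cancel] at hm2n hm3n hm3'n
      have hx : (0:ℝ) ≤ (m (A n)).toReal := ENNReal.toReal_nonneg
      have hy : (0:ℝ) ≤ (m (B n)).toReal := ENNReal.toReal_nonneg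
      have hkey := key_alg a0 b0 c0 (m (A n)).toReal (m (B n)).toReal ha0 hb0 hc0 hbc hx hy IH
      have hAlow : (1 - b0 - c0) * (m (A n)).toReal + a0 * (m (B n)).toReal ≤
          (m (A (n + 1))).toReal := by linarith
      have hfin2 : b0 * (m (A n)).toReal + (1 - a0) * (m (B n)).toReal ≤
          (((1 + a0) * b0 + c0) / (a0 * (1 - b0 - c0))) * (m (A (n + 1))).toReal :=
        hkey.trans (mul_le_mul_of_nonneg_left hAlow ha1.le)
      linarith
  intro n _
  exact main n
end

section
/- Let (M, m) be a finite measure space and let (Δ_n)_{n ≥ 0}, (A_n)_{n ≥ 0}, (B_n)_{n ≥ 0}, (R_n)_{n ≥ 1} be measurable subsets of M such that for every n ≥ 1: Δ_n = Δ_{n−1} \ R_n, and Δ_n is the disjoint union of A_n and B_n. Let b_0, c_0 > 0 with b_0 + c_0 < 1 satisfy, for every n ≥ 1, m(A_{n−1} ∩ B_n) ≤ b_0·m(A_{n−1}) and m(A_{n−1} ∩ R_n) ≤ c_0·m(A_{n−1}), and let a_1 > 0 satisfy m(B_n) ≤ a_1·m(A_n) for every n ≥ 1. Then, with c_2 = (1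 + a_1)/(1 − b_0 − c_0), one has m(Δ_n) ≤ c_2·m(Δ_{n+1}) for every n ≥ 1. -/
open MeasureTheory

/-- Abstract metric estimate for the inductive Markov partition construction:
from `m(A_{n-1} ∩ B_n) ≤ b0 m(A_{n-1})`, `m(A_{n-1} ∩ R_n) ≤ c0 m(A_{n-1})` and
`m(B_n) ≤ a1 m(A_n)` one gets `m(Δ_n) ≤ c2 m(Δ_{n+1})` for `n ≥ 1`,
with `c2 = (1 + a1)/(1 - b0 - c0)`. -/
theorem measure_Delta_ratio {M : Type*} [MeasurableSpace M]
    (m : Measure M) [IsFiniteMeasure m]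
    (Δ A B : ℕ → Set M) (R : ℕ → Set M)
    (hΔmeas : ∀ n, MeasurableSet (Δ n)) (hAmeas : ∀ n, MeasurableSet (A n))
    (hBmeas : ∀ n, MeasurableSet (B n)) (hRmeas : ∀ n, MeasurableSet (R n))
    (hΔ : ∀ n, 1 ≤ n → Δ n = Δ (n - 1) \ R n)
    (hunion : ∀ n, 1 ≤ n → Δ n = A n ∪ B n)
    (hdisj : ∀ n, 1 ≤ n → A n ∩ B n = ∅)
    (b0 c0 : ℝ) (hb0 : 0 < b0) (hc0 : 0 < c0) (hbc : b0 + c0 < 1)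
    (hm3 : ∀ n, 1 ≤ n → (m (A (n - 1) ∩ B n)).toReal ≤ b0 * (m (A (n - 1))).toReal)
    (hm3' : ∀ n, 1 ≤ n → (m (A (n - 1) ∩ R n)).toReal ≤ c0 * (m (A (n - 1))).toReal)
    (a1 : ℝ) (ha1 : 0 < a1)
    (hBA : ∀ n, 1 ≤ n → (m (B n)).toReal ≤ a1 * (m (A n)).toReal) :
    ∀ n, 1 ≤ n →
      (m (Δ n)).toReal ≤ ((1 + a1) / (1 - b0 - c0)) * (m (Δ (n + 1))).toReal := by
  intro n hn
  have hnt : ∀ s : Set M, m s ≠ ⊤ := fun s => measure_ne_top m s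
  have hn1 : 1 ≤ n + 1 := by omega
  have hΔ1 : Δ (n + 1) = Δ n \ R (n + 1) := by simpa using hΔ (n + 1) hn1
  have hsub : A n \ R (n + 1) ⊆ Δ (n + 1) := by
    rw [hΔ1]
    apply Set.diff_subset_diff_left
    rw [hunion n hn]; exact Set.subset_union_left
  have h1 : (m (A n)).toReal
      = (m (A n ∩ R (n + 1))).toReal + (m (A n \ R (n + 1))).toReal := by
    rw [← ENNReal.toReal_add (hnt _) (hnt _), measure_inter_add_diff _ (hRmeas (n + 1))]
  have h2 : (m (A n \ R (n + 1))).toReal ≤ (m (Δ (n + 1))).toReal :=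
    ENNReal.toReal_mono (hnt _) (measure_mono hsub)
  have h3 : (m (A n ∩ R (n + 1))).toReal ≤ c0 * (m (A n)).toReal := by
    simpa using hm3' (n + 1) hn1
  have hdisj' : Disjoint (A n) (B n) :=
    Set.disjoint_iff_inter_eq_empty.mpr (hdisj n hn)
  have hΔn : (m (Δ n)).toReal = (m (A n)).toReal + (m (B n)).toReal := by
    rw [hunion n hn, measure_union hdisj' (hBmeas n),
      ENNReal.toReal_add (hnt _) (hnt _)]
  have hB := hBA n hn
  have hA0 : 0 ≤ (m (A n)).toReal := ENNReal.toReal_nonneg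
  have hΔ'0 : 0 ≤ (m (Δ (n + 1))).toReal := ENNReal.toReal_nonneg
  have hd : 0 < 1 - b0 - c0 := by linarith
  rw [div_mul_eq_mul_div, le_div_iff₀ hd]
  nlinarith [mul_nonneg hA0 hb0.le]
end

section
/- Let N ≥ 0 and R_0 ≥ 1 be integers, b_1 ∈ (0, 1], let (d_n)_{n ≥ 0} be a nonincreasing sequence of nonnegative real numbers, and let (q_n)_{n ≥ 1} be a sequence with q_n ∈ [0, 1] such that d_{n+N} ≤ (1 − b_1·q_n)·d_{n−1} for every n ≥ 1. Then for every n ≥ R_0 one has d_{n+N} ≤ exp( −(b_1/(N+1))·∑_{j=R_0}^{n} q_j ) · d_0. -/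
/-- Chaining the recurrence along the arithmetic progression with step `N+1`
descending from `j`, we get an exponential bound with the sum of `q` over that
progression. -/
private lemma chain_bound (N R₀ : ℕ) (hR₀ : 1 ≤ R₀)
    (b1 : ℝ)
    (d : ℕ → ℝ) (hdpos : ∀ n, 0 ≤ d n) (hdmono : Antitone d)
    (q : ℕ → ℝ)
    (hrec : ∀ n, 1 ≤ n → d (n + N) ≤ (1 - b1 * q n) * d (n - 1)) :
    ∀ j, R₀ ≤ j →
      d (j + N) ≤ Real.exp (-b1 * ∑ i ∈ (Finset.Icc R₀ j).filter
        (fun i => (j - i) % (N + 1) = 0), q i) * d 0 := by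
  intro j
  induction j using Nat.strong_induction_on with
  | _ j ih =>
    intro hj
    have h1j : 1 ≤ j := le_trans hR₀ hj
    have step : d (j + N) ≤ Real.exp (-(b1 * q j)) * d (j - 1) := by
      have h := hrec j h1j
      have hexp : (1 - b1 * q j) ≤ Real.exp (-(b1 * q j)) := by
        have := Real.add_one_le_exp (-(b1 * q j)); linarith
      calc d (j + N) ≤ (1 - b1 * q j) * d (j - 1) := h
        _ ≤ Real.exp (-(b1 * q j)) * d (j - 1) :=
            mul_le_mul_of_nonneg_right hexp (hdpos _)
    by_cases hcase : R₀ + (N + 1) ≤ j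
    · -- recursive case
      have hj' : R₀ ≤ j - (N + 1) := by omega
      have hlt : j - (N + 1) < j := by omega
      have IH := ih _ hlt hj'
      have heq : j - 1 = (j - (N + 1)) + N := by omega
      rw [heq] at step
      have hset : (Finset.Icc R₀ j).filter (fun i => (j - i) % (N + 1) = 0)
          = insert j ((Finset.Icc R₀ (j - (N + 1))).filter
            (fun i => ((j - (N + 1)) - i) % (N + 1) = 0)) := by
        ext i
        simp only [Finset.mem_insert, Finset.mem_filter, Finset.mem_Icc]
        constructor
        · rintro ⟨⟨hi1, hi2⟩, hmod⟩
          by_cases hij : i = j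
          · left; exact hij
          · right
            have hge : N + 1 ≤ j - i := by
              by_contra hlt'
              have := Nat.mod_eq_of_lt (show j - i < N + 1 by omega)
              omega
            refine ⟨⟨hi1, by omega⟩, ?_⟩
            have h2 : (j - (N + 1)) - i = (j - i) - (N + 1) := by omega
            have h3 : j - i = ((j - i) - (N + 1)) + (N + 1) := by omega
            rw [h2]
            have := Nat.add_mod_right ((j - i) - (N + 1)) (N + 1)
            rw [← h3] at this
            omega
        · rintro (h | ⟨⟨hi1, hi2⟩, hmod⟩)
          · subst h
            exact ⟨⟨hj, le_refl _⟩, by simp⟩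
          · refine ⟨⟨hi1, by omega⟩, ?_⟩
            have h3 : j - i = ((j - (N + 1)) - i) + (N + 1) := by omega
            rw [h3, Nat.add_mod_right]
            exact hmod
      have hnotmem : j ∉ (Finset.Icc R₀ (j - (N + 1))).filter
          (fun i => ((j - (N + 1)) - i) % (N + 1) = 0) := by
        simp only [Finset.mem_filter, Finset.mem_Icc]
        omega
      rw [hset, Finset.sum_insert hnotmem]
      calc d (j + N) ≤ Real.exp (-(b1 * q j)) * d ((j - (N + 1)) + N) := step
        _ ≤ Real.exp (-(b1 * q j)) * (Real.exp (-b1 * ∑ i ∈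
              (Finset.Icc R₀ (j - (N + 1))).filter
                (fun i => ((j - (N + 1)) - i) % (N + 1) = 0), q i) * d 0) :=
            mul_le_mul_of_nonneg_left IH (Real.exp_nonneg _)
        _ = Real.exp (-b1 * (q j + ∑ i ∈ (Finset.Icc R₀ (j - (N + 1))).filter
              (fun i => ((j - (N + 1)) - i) % (N + 1) = 0), q i)) * d 0 := by
            rw [← mul_assoc, ← Real.exp_add]; ring_nf
    · -- base case : the progression is just {j}
      have hset : (Finset.Icc R₀ j).filter (fun i => (j - i) % (N + 1) = 0)
          = {j} := by
        ext i
        simp only [Finset.mem_filter, Finset.mem_Icc, Finset.mem_singleton]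
        constructor
        · rintro ⟨⟨hi1, hi2⟩, hmod⟩
          have hlt' : j - i < N + 1 := by omega
          have := Nat.mod_eq_of_lt hlt'
          omega
        · rintro rfl
          exact ⟨⟨hj, le_refl _⟩, by simp⟩
      rw [hset, Finset.sum_singleton]
      have hd0 : d (j - 1) ≤ d 0 := hdmono (Nat.zero_le _)
      calc d (j + N) ≤ Real.exp (-(b1 * q j)) * d (j - 1) := step
        _ ≤ Real.exp (-(b1 * q j)) * d 0 :=
            mul_le_mul_of_nonneg_left hd0 (Real.exp_nonneg _)
        _ = Real.exp (-b1 * q j) * d 0 := by ring_nf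

/-- From the recurrence `d (n+N) ≤ (1 - b1 * q n) * d (n-1)` (for `n ≥ 1`) one derives,
for a nonincreasing nonnegative sequence `d` and `q n ∈ [0,1]`, the exponential bound
`d (n+N) ≤ exp (-(b1/(N+1)) * ∑_{j=R₀}^n q j) * d 0` for all `n ≥ R₀`. -/
theorem exp_bound_from_recurrence (N R₀ : ℕ) (hR₀ : 1 ≤ R₀)
    (b1 : ℝ) (hb1 : 0 < b1) (hb1' : b1 ≤ 1)
    (d : ℕ → ℝ) (hdpos : ∀ n, 0 ≤ d n) (hdmono : Antitone d)
    (q : ℕ → ℝ) (hq : ∀ n, 1 ≤ n → q n ∈ Set.Icc (0 : ℝ) 1)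
    (hrec : ∀ n, 1 ≤ n → d (n + N) ≤ (1 - b1 * q n) * d (n - 1)) :
    ∀ n, R₀ ≤ n →
      d (n + N) ≤ Real.exp (-(b1 / ((N : ℝ) + 1)) * ∑ j ∈ Finset.Icc R₀ n, q j) * d 0 := by
  intro n hn
  -- bound for each residue class `r` of `n - i` mod `N+1`
  have class_bound : ∀ r ∈ Finset.range (N + 1),
      d (n + N) ≤ Real.exp (-b1 * ∑ i ∈ (Finset.Icc R₀ n).filter
        (fun i => (n - i) % (N + 1) = r), q i) * d 0 := by
    intro r hr
    rw [Finset.mem_range] at hr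
    by_cases hcase : R₀ + r ≤ n
    · have hjr : R₀ ≤ n - r := by omega
      have hchain := chain_bound N R₀ hR₀ b1 d hdpos hdmono q hrec (n - r) hjr
      have hmono : d (n + N) ≤ d ((n - r) + N) := hdmono (by omega)
      have hset : (Finset.Icc R₀ (n - r)).filter (fun i => ((n - r) - i) % (N + 1) = 0)
          = (Finset.Icc R₀ n).filter (fun i => (n - i) % (N + 1) = r) := by
        ext i
        simp only [Finset.mem_filter, Finset.mem_Icc]
        constructor
        · rintro ⟨⟨h1, h2⟩, h3⟩
          refine ⟨⟨h1, by omega⟩, ?_⟩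
          have heq : n - i = ((n - r) - i) + r := by omega
          rw [heq, Nat.add_mod, h3]
          simp [Nat.mod_eq_of_lt hr, Nat.mod_eq_of_lt hr]
        · rintro ⟨⟨h1, h2⟩, h3⟩
          have hle : r ≤ n - i := by
            have := Nat.mod_le (n - i) (N + 1)
            omega
          refine ⟨⟨h1, by omega⟩, ?_⟩
          have heq : (n - r) - i = (n - i) - r := by omega
          rw [heq]
          -- (n - i) % (N+1) = r implies ((n - i) - r) % (N+1) = 0
          have hdm := Nat.div_add_mod (n - i) (N + 1)
          rw [h3] at hdm
          have h4 : (n - i) - r = (N + 1) * ((n - i) / (N + 1)) := by omega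
          rw [h4]
          exact Nat.mul_mod_right _ _
      rw [hset] at hchain
      exact le_trans hmono hchain
    · have hempty : (Finset.Icc R₀ n).filter (fun i => (n - i) % (N + 1) = r) = ∅ := by
        ext i
        simp only [Finset.mem_filter, Finset.mem_Icc, Finset.notMem_empty, iff_false]
        rintro ⟨⟨h1, h2⟩, h3⟩
        have := Nat.mod_le (n - i) (N + 1)
        omega
      rw [hempty, Finset.sum_empty, mul_zero, Real.exp_zero, one_mul]
      exact hdmono (Nat.zero_le _)
  -- take the geometric mean over the `N+1` classes
  have hmaps : ∀ i ∈ Finset.Icc R₀ n, (n - i) % (N + 1) ∈ Finset.range (N + 1) := by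
    intro i _
    exact Finset.mem_range.mpr (Nat.mod_lt _ (Nat.succ_pos N))
  have hfiber := Finset.sum_fiberwise_of_maps_to hmaps q
  have hpow : (d (n + N)) ^ (N + 1)
      ≤ (Real.exp (-(b1 / ((N : ℝ) + 1)) * ∑ j ∈ Finset.Icc R₀ n, q j) * d 0) ^ (N + 1) := by
    calc (d (n + N)) ^ (N + 1)
        = ∏ _r ∈ Finset.range (N + 1), d (n + N) := by
          rw [Finset.prod_const, Finset.card_range]
      _ ≤ ∏ r ∈ Finset.range (N + 1), (Real.exp (-b1 * ∑ i ∈ (Finset.Icc R₀ n).filter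
            (fun i => (n - i) % (N + 1) = r), q i) * d 0) :=
          Finset.prod_le_prod (fun r _ => hdpos _) class_bound
      _ = (∏ r ∈ Finset.range (N + 1), Real.exp (-b1 * ∑ i ∈ (Finset.Icc R₀ n).filter
            (fun i => (n - i) % (N + 1) = r), q i)) * (d 0) ^ (N + 1) := by
          rw [Finset.prod_mul_distrib, Finset.prod_const, Finset.card_range]
      _ = Real.exp (-b1 * ∑ j ∈ Finset.Icc R₀ n, q j) * (d 0) ^ (N + 1) := by
          rw [← Real.exp_sum, ← Finset.mul_sum, hfiber]
      _ = (Real.exp (-(b1 / ((N : ℝ) + 1)) * ∑ j ∈ Finset.Icc R₀ n, q j) * d 0) ^ (N + 1) := by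
          rw [mul_pow, ← Real.exp_nat_mul]
          congr 2
          have hN : ((N : ℝ) + 1) ≠ 0 := by positivity
          push_cast
          field_simp
  exact le_of_pow_le_pow_left₀ (Nat.succ_ne_zero N)
    (mul_nonneg (Real.exp_nonneg _) (hdpos 0)) hpow
end

section
/- Let N ≥ 0 and R_0 ≥ 1 be integers, b_1 ∈ (0, 1], let (d_n)_{n ≥ 0} be a nonincreasing sequence of nonnegative real numbers, and let (q_n)_{n ≥ 1} be a sequence with q_n ∈ [0, 1] such that d_{n+N} ≤ (1 − b_1·q_n)·d_{n−1} for every n ≥ 1. Let α > 0 and θ ∈ (0, 1], let n ≥ R_0, and suppose that #{ j : 1 ≤ j ≤ n and q_j ≥ α } ≥ (θ/12)·n. Then d_{n+N} ≤ exp( −(b_1·α/(N+1))·((θ/12)·n − R_0) ) · d_0. -/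
open scoped Classical

/-- Exponential tail estimate for the case `n ∉ F`: if at least `(θ/12) * n` of the
indices `1 ≤ j ≤ n` satisfy `q j ≥ α`, then the recurrence
`d (n+N) ≤ (1 - b1 * q n) * d (n-1)` yields
`d (n+N) ≤ exp (-(b1*α/(N+1)) * ((θ/12) * n - R₀)) * d 0`. -/
theorem exp_decay_case_not_F (N R₀ : ℕ) (hR₀ : 1 ≤ R₀)
    (b1 : ℝ) (hb1 : 0 < b1) (hb1' : b1 ≤ 1)
    (d : ℕ → ℝ) (hdpos : ∀ n, 0 ≤ d n) (hdmono : Antitone d)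
    (q : ℕ → ℝ) (hq : ∀ n, 1 ≤ n → q n ∈ Set.Icc (0 : ℝ) 1)
    (hrec : ∀ n, 1 ≤ n → d (n + N) ≤ (1 - b1 * q n) * d (n - 1))
    (α θ : ℝ) (hα : 0 < α) (hθ : 0 < θ) (hθ' : θ ≤ 1)
    (n : ℕ) (hn : R₀ ≤ n)
    (hcard : (θ / 12) * (n : ℝ) ≤
      (((Finset.Icc 1 n).filter fun j => α ≤ q j).card : ℝ)) :
    d (n + N) ≤
      Real.exp (-(b1 * α / ((N : ℝ) + 1)) * ((θ / 12) * (n : ℝ) - (R₀ : ℝ))) * d 0 := by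
  set K : ℕ → ℕ := fun m => ((Finset.Icc 1 m).filter fun j => α ≤ q j).card with hK
  set c : ℝ := 1 - b1 * α with hc
  -- the good set for n is nonempty
  have hn1 : 1 ≤ n := le_trans hR₀ hn
  have hKn : 0 < K n := by
    by_contra h
    push_neg at h
    interval_cases hKn : (K n)
    · simp only [hK] at hKn
      rw [hKn] at hcard
      have : (0:ℝ) < (θ/12) * n := by positivity
      simp at hcard; linarith
  obtain ⟨j0, hj0⟩ := Finset.card_pos.mp hKn
  have hα1 : α ≤ 1 := by
    simp only [hK, Finset.mem_filter, Finset.mem_Icc] at hj0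
    exact le_trans hj0.2 (hq j0 hj0.1.1).2
  have hc0 : 0 ≤ c := by
    have : b1 * α ≤ 1 := by nlinarith
    simp [hc]; linarith
  have hc1 : c ≤ 1 := by
    have : 0 ≤ b1 * α := by positivity
    simp [hc]; linarith
  -- key induction
  have key : ∀ m : ℕ, d (m + N) ≤ c ^ ((K m + N) / (N + 1)) * d 0 := by
    intro m
    induction m using Nat.strong_induction_on with
    | _ m ih =>
      by_cases hKm : K m = 0
      · have : (K m + N) / (N + 1) = 0 := by
          rw [hKm]; exact Nat.div_eq_of_lt (by omega)
        rw [this, pow_zero, one_mul]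
        exact hdmono (Nat.zero_le _)
      · have hne : ((Finset.Icc 1 m).filter fun j => α ≤ q j).Nonempty :=
          Finset.card_pos.mp (Nat.pos_of_ne_zero hKm)
        set jm := ((Finset.Icc 1 m).filter fun j => α ≤ q j).max' hne with hjm
        have hjmem := ((Finset.Icc 1 m).filter fun j => α ≤ q j).max'_mem hne
        rw [← hjm] at hjmem
        simp only [Finset.mem_filter, Finset.mem_Icc] at hjmem
        obtain ⟨⟨hjm1, hjmn⟩, hjq⟩ := hjmem
        -- K m = K jm
        have hKeq : K m = K jm := by
          apply le_antisymm
          · apply Finset.card_le_card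
            intro i hi
            have hile : i ≤ jm := Finset.le_max' _ i hi
            simp only [Finset.mem_filter, Finset.mem_Icc] at hi ⊢
            exact ⟨⟨hi.1.1, hile⟩, hi.2⟩
          · apply Finset.card_le_card
            intro i hi
            simp only [Finset.mem_filter, Finset.mem_Icc] at hi ⊢
            exact ⟨⟨hi.1.1, le_trans hi.1.2 hjmn⟩, hi.2⟩
        have step1 : d (m + N) ≤ d (jm + N) := hdmono (by omega)
        have step2 : d (jm + N) ≤ c * d (jm - 1) := by
          have h1 := hrec jm hjm1
          have h2 : (1 - b1 * q jm) * d (jm - 1) ≤ c * d (jm - 1) := by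
            apply mul_le_mul_of_nonneg_right _ (hdpos _)
            have : b1 * α ≤ b1 * q jm := by
              apply mul_le_mul_of_nonneg_left hjq (le_of_lt hb1)
            simp [hc]; linarith
          linarith
        by_cases hjN : jm ≤ N
        · -- small case: exponent is 1
          have hKle : K m ≤ N + 1 := by
            rw [hKeq]
            calc K jm ≤ (Finset.Icc 1 jm).card := Finset.card_filter_le _ _
              _ = jm := by rw [Nat.card_Icc]; omega
              _ ≤ N + 1 := by omega
          have hexp : (K m + N) / (N + 1) = 1 := by
            have h1 : 1 ≤ K m := Nat.pos_of_ne_zero hKm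
            have h2 : (K m + N) / (N + 1) < 2 :=
              Nat.div_lt_of_lt_mul (show K m + N < (N + 1) * 2 by omega)
            have h3 : 1 ≤ (K m + N) / (N + 1) := by
              apply Nat.le_div_iff_mul_le (by omega) |>.mpr; omega
            omega
          rw [hexp, pow_one]
          calc d (m + N) ≤ c * d (jm - 1) := le_trans step1 step2
            _ ≤ c * d 0 := mul_le_mul_of_nonneg_left (hdmono (Nat.zero_le _)) hc0
        · -- big case: recurse at m' = jm - 1 - N
          push_neg at hjN
          set m' := jm - 1 - N with hm'
          have hm'N : m' + N = jm - 1 := by omega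
          have hm'lt : m' < m := by omega
          have ihm := ih m' hm'lt
          rw [hm'N] at ihm
          -- K jm ≤ K m' + (N + 1)
          have hKjm : K jm ≤ K m' + (N + 1) := by
            have hsub : (Finset.Icc 1 jm).filter (fun j => α ≤ q j) ⊆
                ((Finset.Icc 1 m').filter fun j => α ≤ q j) ∪
                  ((Finset.Icc (m' + 1) jm).filter fun j => α ≤ q j) := by
              intro i hi
              simp only [Finset.mem_filter, Finset.mem_Icc, Finset.mem_union] at hi ⊢
              rcases le_or_gt i m' with h | h
              · exact Or.inl ⟨⟨hi.1.1, h⟩, hi.2⟩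
              · exact Or.inr ⟨⟨h, hi.1.2⟩, hi.2⟩
            calc K jm ≤ (((Finset.Icc 1 m').filter fun j => α ≤ q j) ∪
                  ((Finset.Icc (m' + 1) jm).filter fun j => α ≤ q j)).card :=
                  Finset.card_le_card hsub
              _ ≤ K m' + ((Finset.Icc (m' + 1) jm).filter fun j => α ≤ q j).card :=
                  Finset.card_union_le _ _
              _ ≤ K m' + (Finset.Icc (m' + 1) jm).card :=
                  Nat.add_le_add_left (Finset.card_filter_le _ _) _
              _ ≤ K m' + (N + 1) := by
                  rw [Nat.card_Icc]; omega
          have hexp : (K m + N) / (N + 1) ≤ (K m' + N) / (N + 1) + 1 := by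
            rw [hKeq]
            calc (K jm + N) / (N + 1) ≤ (K m' + (N + 1) + N) / (N + 1) := by
                  apply Nat.div_le_div_right; omega
              _ = (K m' + N) / (N + 1) + 1 := by
                  rw [show K m' + (N + 1) + N = K m' + N + (N + 1) by ring,
                    Nat.add_div_right _ (by omega)]
          calc d (m + N) ≤ c * d (jm - 1) := le_trans step1 step2
            _ ≤ c * (c ^ ((K m' + N) / (N + 1)) * d 0) :=
                mul_le_mul_of_nonneg_left ihm hc0
            _ = c ^ ((K m' + N) / (N + 1) + 1) * d 0 := by ring
            _ ≤ c ^ ((K m + N) / (N + 1)) * d 0 := by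
                apply mul_le_mul_of_nonneg_right _ (hdpos 0)
                exact pow_le_pow_of_le_one hc0 hc1 hexp
  -- now combine
  set M := (K n + N) / (N + 1) with hM
  have hMreal : (θ / 12) * (n : ℝ) ≤ (M : ℝ) * ((N : ℝ) + 1) := by
    have hdm := Nat.div_add_mod (K n + N) (N + 1)
    have hmodlt : (K n + N) % (N + 1) < N + 1 := Nat.mod_lt _ (by omega)
    have hdmR : ((N : ℝ) + 1) * (M : ℝ) + (((K n + N) % (N + 1) : ℕ) : ℝ)
        = (K n : ℝ) + (N : ℝ) := by exact_mod_cast hdm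
    have hmodR : (((K n + N) % (N + 1) : ℕ) : ℝ) ≤ (N : ℝ) := by
      exact_mod_cast Nat.le_of_lt_succ hmodlt
    have h1 : (K n : ℝ) ≤ (M : ℝ) * ((N : ℝ) + 1) := by nlinarith
    linarith
  have hcexp : c ^ M ≤ Real.exp (-(b1 * α) * M) := by
    have h1 : c ≤ Real.exp (-(b1 * α)) := by
      have := Real.add_one_le_exp (-(b1 * α))
      simp [hc]; linarith
    calc c ^ M ≤ Real.exp (-(b1 * α)) ^ M := pow_le_pow_left₀ hc0 h1 M
      _ = Real.exp (-(b1 * α) * M) := by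
          rw [← Real.exp_nat_mul]; ring_nf
  have hfinal : Real.exp (-(b1 * α) * M) ≤
      Real.exp (-(b1 * α / ((N : ℝ) + 1)) * ((θ / 12) * (n : ℝ) - (R₀ : ℝ))) := by
    apply Real.exp_le_exp.mpr
    have hN1 : (0:ℝ) < (N : ℝ) + 1 := by positivity
    have hR0 : (0:ℝ) ≤ (R₀ : ℝ) := Nat.cast_nonneg _
    have h2 : (θ / 12) * (n : ℝ) - (R₀ : ℝ) ≤ (M : ℝ) * ((N : ℝ) + 1) := by linarith
    rw [neg_mul, neg_mul, neg_le_neg_iff, div_mul_eq_mul_div, div_le_iff₀ hN1]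
    nlinarith [mul_pos hb1 hα, mul_nonneg (le_of_lt (mul_pos hb1 hα))
      (by linarith : (0:ℝ) ≤ (M : ℝ) * ((N : ℝ) + 1) - ((θ / 12) * (n : ℝ) - (R₀ : ℝ)))]
  calc d (n + N) ≤ c ^ M * d 0 := key n
    _ ≤ Real.exp (-(b1 * α) * M) * d 0 :=
        mul_le_mul_of_nonneg_right hcexp (hdpos 0)
    _ ≤ _ := mul_le_mul_of_nonneg_right hfinal (hdpos 0)
end

section
/- Let (Δ, m) be a finite measure space, let (Λ, dist) be a metric space, and for each f ∈ Λ let R_f : Δ → ℕ be a measurable integrable function. Fix f_0 ∈ Λ and assume: (u_0) for every integer N ≥ 1 and every ε > 0 there exists δ > 0 such that dist(f, f_0) < δ implies m({R_f = j} △ {R_{f_0} = j}) < ε for every 0 ≤ j ≤ N, where △ denotes symmetric difference; and for every ε > 0 there exist an integer N ≥ 1 and δ > 0 such that dist(f, f_0) < δ implies ∑_{j=N}^{∞} m({R_f > j}) < ε. Then for every ε > 0 there exists δ > 0 such that dist(f, f_0) < δ implies ∫_Δ |R_f − R_{f_0}| dm < ε. -/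
open MeasureTheory
open scoped symmDiff
open scoped ENNReal

private lemma nat_key (a b N : ℕ) :
    (a - b) + (b - a) ≤ (if min a N = min b N then 0 else N) + (a - min a N) + (b - min b N) := by
  split_ifs with h <;> omega

private lemma ennreal_key (a b N : ℕ) :
    ENNReal.ofReal |(a : ℝ) - b| ≤ (if min a N = min b N then 0 else (N : ℝ≥0∞))
      + ((a - min a N : ℕ) : ℝ≥0∞) + ((b - min b N : ℕ) : ℝ≥0∞) := by
  have habs : |(a : ℝ) - b| = ((a - b + (b - a) : ℕ) : ℝ) := by
    rcases le_total a b with h | h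
    · rw [abs_sub_comm, abs_of_nonneg (sub_nonneg.2 (Nat.cast_le.2 h)),
        Nat.sub_eq_zero_of_le h, zero_add, Nat.cast_sub h]
    · rw [abs_of_nonneg (sub_nonneg.2 (Nat.cast_le.2 h)),
        Nat.sub_eq_zero_of_le h, add_zero, Nat.cast_sub h]
  rw [habs, ENNReal.ofReal_natCast]
  have hnat := nat_key a b N
  split_ifs at hnat ⊢ with h
  · calc ((a - b + (b - a) : ℕ) : ℝ≥0∞)
        ≤ ((0 + (a - min a N) + (b - min b N) : ℕ) : ℝ≥0∞) := Nat.cast_le.2 hnat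
      _ = _ := by push_cast; ring
  · calc ((a - b + (b - a) : ℕ) : ℝ≥0∞)
        ≤ ((N + (a - min a N) + (b - min b N) : ℕ) : ℝ≥0∞) := Nat.cast_le.2 hnat
      _ = _ := by push_cast; ring

private lemma trunc_tsum (a N : ℕ) :
    ((a - min a N : ℕ) : ℝ≥0∞) = ∑' j : ℕ, if N + j < a then (1 : ℝ≥0∞) else 0 := by
  rw [tsum_eq_sum (s := Finset.range (a - N))
    (fun b hb => by rw [if_neg]; simp only [Finset.mem_range, not_lt] at hb; omega)]
  rw [Finset.sum_congr rfl (fun j hj => if_pos (by simp only [Finset.mem_range] at hj; omega))]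
  rw [Finset.sum_const, Finset.card_range, nsmul_eq_mul, mul_one]
  norm_cast
  omega

private lemma trunc_lintegral {Δ : Type*} [MeasurableSpace Δ] (m : MeasureTheory.Measure Δ)
    (g : Δ → ℕ) (hg : Measurable g) (N : ℕ) :
    ∫⁻ x, ((g x - min (g x) N : ℕ) : ℝ≥0∞) ∂m = ∑' j : ℕ, m {x | N + j < g x} := by
  have hmeas : ∀ j : ℕ, MeasurableSet {x | N + j < g x} :=
    fun j => hg (MeasurableSet.of_discrete (s := {n | N + j < n}))
  calc ∫⁻ x, ((g x - min (g x) N : ℕ) : ℝ≥0∞) ∂m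
      = ∫⁻ x, ∑' j : ℕ, Set.indicator {x | N + j < g x} 1 x ∂m := by
        refine lintegral_congr fun x => ?_
        rw [trunc_tsum (g x) N]
        exact tsum_congr fun j => by
          simp [Set.indicator_apply, Set.mem_setOf_eq]
    _ = ∑' j : ℕ, ∫⁻ x, Set.indicator {x | N + j < g x} 1 x ∂m :=
        MeasureTheory.lintegral_tsum fun j =>
          ((measurable_one).indicator (hmeas j)).aemeasurable
    _ = ∑' j : ℕ, m {x | N + j < g x} := tsum_congr fun j =>
          MeasureTheory.lintegral_indicator_one (hmeas j)


/-- Uniformity condition (u₁): if the measures of the level sets `{R_f = j}` vary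
continuously with `f` at `f₀` (condition (u₀)) and the tails `∑_{j≥N} m {R_f > j}`
are uniformly small for `f` near `f₀`, then `f ↦ R_f` is continuous at `f₀` in `L¹(m)`. -/
theorem uniformity_u1 {Δ : Type*} [MeasurableSpace Δ] (m : Measure Δ) [IsFiniteMeasure m]
    {Λ : Type*} [MetricSpace Λ]
    (R : Λ → Δ → ℕ) (hRmeas : ∀ f, Measurable (R f))
    (hRint : ∀ f, Integrable (fun x => (R f x : ℝ)) m)
    (f₀ : Λ)
    (hu0 : ∀ N : ℕ, 1 ≤ N → ∀ ε : ℝ, 0 < ε → ∃ δ : ℝ, 0 < δ ∧ ∀ f : Λ, dist f f₀ < δ →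
      ∀ j ≤ N, m ({x | R f x = j} ∆ {x | R f₀ x = j}) < ENNReal.ofReal ε)
    (htail : ∀ ε : ℝ, 0 < ε → ∃ N : ℕ, 1 ≤ N ∧ ∃ δ : ℝ, 0 < δ ∧
      ∀ f : Λ, dist f f₀ < δ →
        (∑' j : ℕ, m {x | N + j < R f x}) < ENNReal.ofReal ε) :
    ∀ ε : ℝ, 0 < ε → ∃ δ : ℝ, 0 < δ ∧ ∀ f : Λ, dist f f₀ < δ →
      ∫ x, |(R f x : ℝ) - (R f₀ x : ℝ)| ∂m < ε := by
  intro ε hε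
  obtain ⟨N, hN1, δ₁, hδ₁pos, hδ₁⟩ := htail (ε / 4) (by linarith)
  have hN0 : (0 : ℝ) < N := by exact_mod_cast hN1
  set ε' : ℝ := ε / (2 * ((N : ℝ) * ((N : ℝ) + 1))) with hε'def
  have hε'pos : 0 < ε' := by
    apply div_pos hε
    nlinarith
  obtain ⟨δ₂, hδ₂pos, hδ₂⟩ := hu0 N hN1 ε' hε'pos
  refine ⟨min δ₁ δ₂, lt_min hδ₁pos hδ₂pos, fun f hf => ?_⟩
  have hf1 : dist f f₀ < δ₁ := lt_of_lt_of_le hf (min_le_left _ _)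
  have hf2 : dist f f₀ < δ₂ := lt_of_lt_of_le hf (min_le_right _ _)
  have hf0 : dist f₀ f₀ < δ₁ := by simpa using hδ₁pos
  -- bad set where truncations differ
  set bad : Set Δ := {x | min (R f x) N = min (R f₀ x) N}ᶜ with hbaddef
  have hminmeas : ∀ g : Λ, Measurable fun x => min (R g x) N :=
    fun g => (Measurable.of_discrete (f := fun n : ℕ => min n N)).comp (hRmeas g)
  have hbadmeas : MeasurableSet bad :=
    (measurableSet_eq_fun (hminmeas f) (hminmeas f₀)).compl
  -- bad is covered by the symmetric differences
  have hbadsub : bad ⊆ ⋃ j ∈ Finset.range (N + 1), ({x | R f x = j} ∆ {x | R f₀ x = j}) := by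
    intro x hx
    have hx' : min (R f x) N ≠ min (R f₀ x) N := hx
    simp only [Set.mem_iUnion, Finset.mem_range, exists_prop]
    by_cases hfa : R f x ≤ N
    · refine ⟨R f x, by omega, Set.mem_symmDiff.2 (Or.inl ⟨rfl, fun h => ?_⟩)⟩
      have : R f₀ x = R f x := h
      exact hx' (by rw [this])
    · have hb : R f₀ x < N := by
        rcases lt_or_ge (R f₀ x) N with h | h
        · exact h
        · exfalso; apply hx'; omega
      refine ⟨R f₀ x, by omega, Set.mem_symmDiff.2 (Or.inr ⟨rfl, fun h => ?_⟩)⟩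
      have : R f x = R f₀ x := h
      omega
  -- measure of the bad set
  have hbadmeasure : m bad ≤ ((N : ℝ≥0∞) + 1) * ENNReal.ofReal ε' := by
    calc m bad ≤ m (⋃ j ∈ Finset.range (N + 1), ({x | R f x = j} ∆ {x | R f₀ x = j})) :=
          measure_mono hbadsub
      _ ≤ ∑ j ∈ Finset.range (N + 1), m ({x | R f x = j} ∆ {x | R f₀ x = j}) :=
          measure_biUnion_finset_le _ _
      _ ≤ ∑ j ∈ Finset.range (N + 1), ENNReal.ofReal ε' :=
          Finset.sum_le_sum fun j hj =>
            (hδ₂ f hf2 j (by simp only [Finset.mem_range] at hj; omega)).le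
      _ = ((N : ℝ≥0∞) + 1) * ENNReal.ofReal ε' := by
          rw [Finset.sum_const, Finset.card_range, nsmul_eq_mul]
          push_cast
          ring
  -- pointwise bound
  have hpoint : ∀ x, ENNReal.ofReal |(R f x : ℝ) - (R f₀ x : ℝ)| ≤
      bad.indicator (fun _ => (N : ℝ≥0∞)) x
        + ((R f x - min (R f x) N : ℕ) : ℝ≥0∞) + ((R f₀ x - min (R f₀ x) N : ℕ) : ℝ≥0∞) := by
    intro x
    have hk := ennreal_key (R f x) (R f₀ x) N
    by_cases hx : min (R f x) N = min (R f₀ x) N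
    · rw [Set.indicator_of_notMem (by simpa [hbaddef] using hx)]
      simpa [if_pos hx] using hk
    · rw [Set.indicator_of_mem (by simpa [hbaddef] using hx)]
      simpa [if_neg hx] using hk
  -- integral bound in ℝ≥0∞
  have hle : ∫⁻ x, ENNReal.ofReal |(R f x : ℝ) - (R f₀ x : ℝ)| ∂m ≤
      (N : ℝ≥0∞) * m bad + (∑' j : ℕ, m {x | N + j < R f x})
        + (∑' j : ℕ, m {x | N + j < R f₀ x}) := by
    have hmG2 : ∀ g : Λ, Measurable fun x => ((R g x - min (R g x) N : ℕ) : ℝ≥0∞) :=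
      fun g => (Measurable.of_discrete (f := fun n : ℕ => ((n - min n N : ℕ) : ℝ≥0∞))).comp
        (hRmeas g)
    calc ∫⁻ x, ENNReal.ofReal |(R f x : ℝ) - (R f₀ x : ℝ)| ∂m
        ≤ ∫⁻ x, (bad.indicator (fun _ => (N : ℝ≥0∞)) x
            + ((R f x - min (R f x) N : ℕ) : ℝ≥0∞)
            + ((R f₀ x - min (R f₀ x) N : ℕ) : ℝ≥0∞)) ∂m := lintegral_mono hpoint
      _ = (∫⁻ x, bad.indicator (fun _ => (N : ℝ≥0∞)) x ∂m)
            + (∫⁻ x, ((R f x - min (R f x) N : ℕ) : ℝ≥0∞) ∂m)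
            + (∫⁻ x, ((R f₀ x - min (R f₀ x) N : ℕ) : ℝ≥0∞) ∂m) := by
          rw [lintegral_add_right _ (hmG2 f₀), lintegral_add_right _ (hmG2 f)]
      _ = (N : ℝ≥0∞) * m bad + (∑' j : ℕ, m {x | N + j < R f x})
            + (∑' j : ℕ, m {x | N + j < R f₀ x}) := by
          rw [lintegral_indicator_const hbadmeas, trunc_lintegral m (R f) (hRmeas f),
            trunc_lintegral m (R f₀) (hRmeas f₀)]
  -- the bad-set term is at most ε/2
  have hbadterm : (N : ℝ≥0∞) * m bad ≤ ENNReal.ofReal (ε / 2) := by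
    have harith : (N : ℝ) * (((N : ℝ) + 1) * ε') = ε / 2 := by
      rw [hε'def]
      field_simp
    calc (N : ℝ≥0∞) * m bad ≤ (N : ℝ≥0∞) * (((N : ℝ≥0∞) + 1) * ENNReal.ofReal ε') := by
          exact mul_le_mul_right hbadmeasure _
      _ = ENNReal.ofReal ((N : ℝ) * (((N : ℝ) + 1) * ε')) := by
          rw [ENNReal.ofReal_mul (by positivity), ENNReal.ofReal_mul (by positivity)]
          rw [ENNReal.ofReal_natCast, ENNReal.ofReal_add (by positivity) zero_le_one]
          rw [ENNReal.ofReal_natCast, ENNReal.ofReal_one]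
      _ = ENNReal.ofReal (ε / 2) := by rw [harith]
  -- strict bound
  have hlt : ∫⁻ x, ENNReal.ofReal |(R f x : ℝ) - (R f₀ x : ℝ)| ∂m < ENNReal.ofReal ε := by
    refine hle.trans_lt ?_
    have h1 : (N : ℝ≥0∞) * m bad + (∑' j : ℕ, m {x | N + j < R f x})
        < ENNReal.ofReal (ε / 2) + ENNReal.ofReal (ε / 4) :=
      ENNReal.add_lt_add_of_le_of_lt
        (ENNReal.mul_ne_top (ENNReal.natCast_ne_top N) (measure_ne_top m bad))
        hbadterm (hδ₁ f hf1)
    have h2 := ENNReal.add_lt_add h1 (hδ₁ f₀ hf0)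
    refine h2.trans_le (le_of_eq ?_)
    rw [← ENNReal.ofReal_add (by positivity) (by positivity),
      ← ENNReal.ofReal_add (by positivity) (by positivity)]
    congr 1
    ring
  -- convert back to the Bochner integral
  have hint : Integrable (fun x => |(R f x : ℝ) - (R f₀ x : ℝ)|) m :=
    ((hRint f).sub (hRint f₀)).abs
  rw [MeasureTheory.integral_eq_lintegral_of_nonneg_ae
    (Filter.Eventually.of_forall fun x => abs_nonneg _) hint.aestronglyMeasurable]
  exact (ENNReal.lt_ofReal_iff_toReal_lt (ne_top_of_lt hlt)).1 hlt
end

section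
/- Let (M, m) be a finite measure space with m(M) > 0, let f : M → M be measurable, and let B_1, …, B_p, B_{p+1} be a partition of M into measurable sets. Let σ_1 > 1 and C > 0, and suppose that for every n ≥ 1 and every sequence (i_0, i_1, …, i_{n−1}) ∈ {1, …, p+1}^n one has m( B_{i_0} ∩ f^{−1}(B_{i_1}) ∩ ⋯ ∩ f^{−(n−1)}(B_{i_{n−1}}) ) ≤ C·σ_1^{−n}. Then there exists θ > 0, depending only on p and σ_1, such that for m-almost every x ∈ M there is n(x) ∈ ℕ with #{0 ≤ j < n : f^j(x) ∈ B_1 ∪ ⋯ ∪ B_p} ≥ θ·n for every n ≥ n(x). -/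
open MeasureTheory
open scoped Classical ENNReal

set_option maxHeartbeats 1000000 in
/-- If cylinders `B_{i_0} ∩ f⁻¹ B_{i_1} ∩ ⋯ ∩ f^{-(n-1)} B_{i_{n-1}}` of a finite measurable
partition `B 0, …, B p` of `M` have measure at most `C σ₁^{-n}` with `σ₁ > 1`, then there is
`θ > 0` such that almost every orbit spends asymptotic frequency at least `θ` of the time in
`B 0 ∪ ⋯ ∪ B (p-1)` (i.e. outside the last element `B p`). -/
theorem frequency_outside_V {M : Type*} [MeasurableSpace M]
    (m : Measure M) [IsFiniteMeasure m] (hM : 0 < m Set.univ)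
    (f : M → M) (hf : Measurable f)
    (p : ℕ) (B : Fin (p + 1) → Set M) (hBmeas : ∀ i, MeasurableSet (B i))
    (hBdisj : Pairwise (Function.onFun Disjoint B)) (hBcover : (⋃ i, B i) = Set.univ)
    (σ₁ C : ℝ) (hσ₁ : 1 < σ₁) (hC : 0 < C)
    (hcyl : ∀ n : ℕ, 1 ≤ n → ∀ i : Fin n → Fin (p + 1),
      m (⋂ j : Fin n, f^[(j : ℕ)] ⁻¹' B (i j)) ≤ ENNReal.ofReal (C * σ₁ ^ (-(n : ℝ)))) :
    ∃ θ : ℝ, 0 < θ ∧ ∀ᵐ x ∂m, ∃ n₀ : ℕ, ∀ n, n₀ ≤ n →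
      θ * (n : ℝ) ≤ (((Finset.range n).filter fun j =>
        f^[j] x ∈ ⋃ (i : Fin (p + 1)) (_ : (i : ℕ) < p), B i).card : ℝ) := by
  classical
  have hσpos : (0:ℝ) < σ₁ := by linarith
  -- index of the partition element containing a point
  have hex : ∀ y : M, ∃ i, y ∈ B i := by
    intro y
    have : y ∈ ⋃ i, B i := hBcover ▸ Set.mem_univ y
    exact Set.mem_iUnion.mp this
  set idx : M → Fin (p + 1) := fun y => (hex y).choose with hidxdef
  have hidx : ∀ y, y ∈ B (idx y) := fun y => (hex y).choose_spec
  have hidx_iff : ∀ y : M,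
      (y ∈ ⋃ (i : Fin (p+1)) (_ : (i:ℕ) < p), B i) ↔ ((idx y : ℕ) < p) := by
    intro y
    constructor
    · intro hy
      rcases Set.mem_iUnion₂.mp hy with ⟨i, hi, hyB⟩
      have hieq : i = idx y := by
        by_contra hne
        exact Set.disjoint_left.mp (hBdisj hne) hyB (hidx y)
      exact hieq ▸ hi
    · intro h
      exact Set.mem_iUnion₂.mpr ⟨idx y, h, hidx y⟩
  -- constants
  set t : ℝ := (min 2 σ₁ - 1) / (2 * ((p:ℕ) + 1 : ℝ)) with ht_def
  have hmin1 : 1 < min 2 σ₁ := lt_min one_lt_two hσ₁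
  have hp1 : (0:ℝ) < 2 * ((p:ℕ) + 1 : ℝ) := by positivity
  have ht0 : 0 < t := div_pos (by linarith) hp1
  have htmul : t * (2 * ((p:ℕ) + 1 : ℝ)) = min 2 σ₁ - 1 := by
    rw [ht_def]; field_simp
  have hpt : (p:ℝ) * t ≤ (min 2 σ₁ - 1) / 2 := by nlinarith [ht0.le]
  have ht1 : t < 1 := by
    have h1 : min 2 σ₁ - 1 ≤ 1 := by have := min_le_left 2 σ₁; linarith
    nlinarith [mul_nonneg (Nat.cast_nonneg p : (0:ℝ) ≤ p) ht0.le]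
  set a : ℝ := 1 + (p:ℝ) * t with ha_def
  have ha0 : 0 < a := by nlinarith [mul_nonneg (Nat.cast_nonneg p : (0:ℝ) ≤ p) ht0.le]
  have haσ : a < σ₁ := by
    have := min_le_right 2 σ₁
    rw [ha_def]; linarith
  have hu : 1 < σ₁ / a := (one_lt_div ha0).mpr haσ
  have hlogu : 0 < Real.log (σ₁ / a) := Real.log_pos hu
  have hlogt : Real.log t < 0 := Real.log_neg ht0 ht1
  set θ : ℝ := Real.log (σ₁ / a) / (2 * (-Real.log t)) with hθ_def
  have hθ : 0 < θ := div_pos hlogu (by linarith)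
  set r : ℝ := (a / σ₁) * t ^ (-θ) with hr_def
  have hr0 : 0 ≤ r := by positivity
  have htexp : t ^ (-θ) = Real.exp (Real.log (σ₁ / a) / 2) := by
    rw [Real.rpow_def_of_pos ht0]
    congr 1
    rw [hθ_def]
    have hne : Real.log t ≠ 0 := ne_of_lt hlogt
    field_simp
  have hr1 : r < 1 := by
    have h1 : Real.exp (Real.log (σ₁ / a) / 2) < σ₁ / a := by
      calc Real.exp (Real.log (σ₁ / a) / 2) < Real.exp (Real.log (σ₁ / a)) :=
            Real.exp_lt_exp.mpr (by linarith)
        _ = σ₁ / a := Real.exp_log (by positivity)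
    have h2 : (a / σ₁) * (σ₁ / a) = 1 := by field_simp
    calc r = (a / σ₁) * Real.exp (Real.log (σ₁ / a) / 2) := by rw [hr_def, htexp]
      _ < (a / σ₁) * (σ₁ / a) := by
          exact mul_lt_mul_of_pos_left h1 (div_pos ha0 hσpos)
      _ = 1 := h2
  -- bad itineraries
  set bad : ∀ n : ℕ, Finset (Fin n → Fin (p + 1)) := fun n =>
    Finset.univ.filter fun i =>
      (((Finset.univ.filter fun j : Fin n => ((i j : ℕ) < p)).card : ℝ) < θ * n) with hbad_def
  -- counting bound
  have hw : ∀ n : ℕ, (((bad n).card : ℝ)) * t ^ (θ * (n:ℝ)) ≤ a ^ n := by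
    intro n
    set w : Fin (p + 1) → ℝ := fun s => if (s:ℕ) < p then t else 1 with hwdef
    have hw_nonneg : ∀ s, 0 ≤ w s := by
      intro s; rw [hwdef]; dsimp only; split_ifs
      · exact ht0.le
      · exact zero_le_one
    have hsumw : ∑ s, w s = a := by
      rw [Fin.sum_univ_castSucc]
      have h1 : ∀ j : Fin p, w (Fin.castSucc j) = t := by
        intro j; simp [hwdef, j.isLt]
      have h2 : w (Fin.last p) = 1 := by simp [hwdef]
      rw [Finset.sum_congr rfl (fun j _ => h1 j), h2, Finset.sum_const,
        Finset.card_univ, Fintype.card_fin, nsmul_eq_mul, ha_def]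
      ring
    have hprod : ∀ i : Fin n → Fin (p + 1),
        ∏ j, w (i j) = t ^ (Finset.univ.filter fun j : Fin n => ((i j : ℕ) < p)).card := by
      intro i
      rw [← Finset.prod_filter_mul_prod_filter_not Finset.univ (fun j => ((i j : ℕ) < p))]
      have e1 : (∏ j ∈ Finset.univ.filter (fun j : Fin n => ((i j : ℕ) < p)), w (i j)) =
          t ^ (Finset.univ.filter fun j : Fin n => ((i j : ℕ) < p)).card := by
        rw [Finset.prod_congr rfl (fun j hj => ?_), Finset.prod_const]
        simp [hwdef, (Finset.mem_filter.mp hj).2]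
      have e2 : (∏ j ∈ Finset.univ.filter (fun j : Fin n => ¬ ((i j : ℕ) < p)), w (i j)) = 1 :=
        Finset.prod_eq_one fun j hj => by simp [hwdef, (Finset.mem_filter.mp hj).2]
      rw [e1, e2, mul_one]
    calc (((bad n).card : ℝ)) * t ^ (θ * (n:ℝ))
        = ∑ _i ∈ bad n, t ^ (θ * (n:ℝ)) := by rw [Finset.sum_const, nsmul_eq_mul]
      _ ≤ ∑ i ∈ bad n, ∏ j, w (i j) := by
          refine Finset.sum_le_sum fun i hi => ?_
          have hk := (Finset.mem_filter.mp hi).2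
          rw [hprod i, ← Real.rpow_natCast t]
          exact Real.rpow_le_rpow_of_exponent_ge ht0 ht1.le hk.le
      _ ≤ ∑ i : (Fin n → Fin (p + 1)), ∏ j, w (i j) :=
          Finset.sum_le_sum_of_subset_of_nonneg (Finset.filter_subset _ _)
            (fun i _ _ => Finset.prod_nonneg fun j _ => hw_nonneg _)
      _ = ∏ _j : Fin n, ∑ s, w s := by
          rw [Finset.prod_univ_sum]; simp
      _ = (∑ s, w s) ^ n := by
          rw [Finset.prod_const, Finset.card_univ, Fintype.card_fin]
      _ = a ^ n := by rw [hsumw]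
  -- converting the count over `range n` to a count over `Fin n`
  have hcount : ∀ (n : ℕ) (x : M),
      ((Finset.range n).filter fun j =>
        f^[j] x ∈ ⋃ (i : Fin (p + 1)) (_ : (i : ℕ) < p), B i).card
      = (Finset.univ.filter fun j : Fin n => ((idx (f^[(j:ℕ)] x) : ℕ) < p)).card := by
    intro n x
    symm
    apply Finset.card_bij (fun (j : Fin n) _ => (j : ℕ))
    · intro j hj
      have hj' := (Finset.mem_filter.mp hj).2
      exact Finset.mem_filter.mpr ⟨Finset.mem_range.mpr j.isLt, (hidx_iff _).mpr hj'⟩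
    · intro a₁ _ a₂ _ h
      exact Fin.ext h
    · intro b hb
      have hb' := Finset.mem_filter.mp hb
      have hbn := Finset.mem_range.mp hb'.1
      exact ⟨⟨b, hbn⟩, Finset.mem_filter.mpr ⟨Finset.mem_univ _, (hidx_iff _).mp hb'.2⟩, rfl⟩
  -- the exceptional sets
  set E : ℕ → Set M := fun n => {x | (((Finset.range n).filter fun j =>
      f^[j] x ∈ ⋃ (i : Fin (p + 1)) (_ : (i : ℕ) < p), B i).card : ℝ) < θ * n} with hE_def
  have hE : ∀ n, m (E n) ≤ ENNReal.ofReal C * (ENNReal.ofReal r) ^ n := by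
    intro n
    rcases Nat.eq_zero_or_pos n with h0 | hn
    · subst h0
      have hE0 : E 0 = ∅ := by
        ext x
        simp only [hE_def, Set.mem_setOf_eq, Nat.cast_zero, mul_zero,
          Set.mem_empty_iff_false, iff_false, not_lt]
        exact Nat.cast_nonneg _
      rw [hE0]
      simp
    · have hsub : E n ⊆ ⋃ i ∈ bad n, ⋂ j : Fin n, f^[(j:ℕ)] ⁻¹' B (i j) := by
        intro x hx
        have hι : (fun j : Fin n => idx (f^[(j:ℕ)] x)) ∈ bad n := by
          refine Finset.mem_filter.mpr ⟨Finset.mem_univ _, ?_⟩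
          have hx' : (((Finset.range n).filter fun j =>
              f^[j] x ∈ ⋃ (i : Fin (p + 1)) (_ : (i : ℕ) < p), B i).card : ℝ) < θ * n := hx
          rw [hcount n x] at hx'
          exact hx'
        have hxcyl : x ∈ ⋂ j : Fin n, f^[(j:ℕ)] ⁻¹' B (idx (f^[(j:ℕ)] x)) :=
          Set.mem_iInter.mpr fun j => hidx _
        exact Set.mem_biUnion hι hxcyl
      have hreal : (((bad n).card : ℝ)) * (C * σ₁ ^ (-(n:ℝ))) ≤ C * r ^ n := by
        have hrn : r ^ n = (a ^ n / σ₁ ^ n) * t ^ (-(θ * (n:ℝ))) := by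
          rw [hr_def, mul_pow, div_pow]
          congr 1
          rw [← Real.rpow_natCast (t ^ (-θ)) n, ← Real.rpow_mul ht0.le, neg_mul]
        have hbadle : (((bad n).card : ℝ)) ≤ a ^ n * t ^ (-(θ * (n:ℝ))) := by
          have h := hw n
          have hpos : (0:ℝ) < t ^ (θ * (n:ℝ)) := Real.rpow_pos_of_pos ht0 _
          rw [Real.rpow_neg ht0.le, ← div_eq_mul_inv, le_div_iff₀ hpos]
          exact h
        have hσn : σ₁ ^ (-(n:ℝ)) = (σ₁ ^ n)⁻¹ := by
          rw [Real.rpow_neg hσpos.le, Real.rpow_natCast]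
        have hσnpos : (0:ℝ) < σ₁ ^ n := pow_pos hσpos n
        have key : (((bad n).card : ℝ)) * C ≤ C * (a ^ n * t ^ (-(θ * (n:ℝ)))) := by
          have h := mul_le_mul_of_nonneg_right hbadle hC.le
          linarith
        rw [hσn, hrn]
        calc (((bad n).card : ℝ)) * (C * (σ₁ ^ n)⁻¹)
            = ((((bad n).card : ℝ)) * C) * (σ₁ ^ n)⁻¹ := by ring
          _ ≤ (C * (a ^ n * t ^ (-(θ * (n:ℝ))))) * (σ₁ ^ n)⁻¹ :=
              mul_le_mul_of_nonneg_right key (inv_nonneg.mpr hσnpos.le)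
          _ = C * (a ^ n / σ₁ ^ n * t ^ (-(θ * (n:ℝ)))) := by ring
      calc m (E n) ≤ m (⋃ i ∈ bad n, ⋂ j : Fin n, f^[(j:ℕ)] ⁻¹' B (i j)) := measure_mono hsub
        _ ≤ ∑ i ∈ bad n, m (⋂ j : Fin n, f^[(j:ℕ)] ⁻¹' B (i j)) :=
            measure_biUnion_finset_le _ _
        _ ≤ (bad n).card • ENNReal.ofReal (C * σ₁ ^ (-(n:ℝ))) :=
            Finset.sum_le_card_nsmul _ _ _ (fun i _ => hcyl n hn i)
        _ = ENNReal.ofReal (((bad n).card : ℝ)) * ENNReal.ofReal (C * σ₁ ^ (-(n:ℝ))) := by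
            rw [nsmul_eq_mul, ← ENNReal.ofReal_natCast]
        _ = ENNReal.ofReal ((((bad n).card : ℝ)) * (C * σ₁ ^ (-(n:ℝ)))) :=
            (ENNReal.ofReal_mul (Nat.cast_nonneg _)).symm
        _ ≤ ENNReal.ofReal (C * r ^ n) := ENNReal.ofReal_le_ofReal hreal
        _ = ENNReal.ofReal C * (ENNReal.ofReal r) ^ n := by
            rw [ENNReal.ofReal_mul hC.le, ENNReal.ofReal_pow hr0]
  -- summability and Borel–Cantelli
  have hofr : ENNReal.ofReal r < 1 := by
    rw [← ENNReal.ofReal_one]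
    exact ENNReal.ofReal_lt_ofReal_iff_of_nonneg hr0 |>.mpr hr1
  have hfin : ENNReal.ofReal C * (1 - ENNReal.ofReal r)⁻¹ ≠ ⊤ := by
    apply ENNReal.mul_ne_top ENNReal.ofReal_ne_top
    exact ENNReal.inv_ne_top.mpr (tsub_pos_of_lt hofr).ne'
  have hsum : ∑' n, m (E n) ≠ ⊤ := by
    have hle : ∑' n, m (E n) ≤ ENNReal.ofReal C * (1 - ENNReal.ofReal r)⁻¹ := by
      calc ∑' n, m (E n) ≤ ∑' n, ENNReal.ofReal C * (ENNReal.ofReal r) ^ n :=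
            ENNReal.tsum_le_tsum hE
        _ = ENNReal.ofReal C * (1 - ENNReal.ofReal r)⁻¹ := by
            rw [ENNReal.tsum_mul_left, ENNReal.tsum_geometric]
    exact ne_top_of_le_ne_top hfin hle
  refine ⟨θ, hθ, ?_⟩
  filter_upwards [MeasureTheory.ae_eventually_notMem hsum] with x hx
  rcases Filter.eventually_atTop.mp hx with ⟨n₀, hn₀⟩
  exact ⟨n₀, fun n hn => not_lt.mp (hn₀ n hn)⟩
end

section
/- Let E = ℝ^d with the Euclidean norm, let 𝒞 ⊆ E be a closed set, and let f : E → E be a map that is differentiable at every point of E \ 𝒞 with invertible derivative Df(x) there. Fix constants B > 1, β > 0, b > 0 with 2b < min{1, 1/β}, 0 < σ < 1, 0 < δ ≤ 1, and δ_1 > 0 with 4δ_1 < δ and 4Bδ_1 < δ^β·|log σ|. Assume condition (s₂): for all x, y ∈ E \ 𝒞 with dist(x, y) < dist(x, 𝒞)/2 one has |log‖Df(x)^{−1}‖ − log‖Df(y)^{−1}‖| ≤ (B/dist(x, 𝒞)^β)·dist(x, y). Let x ∈ E and let n ≥ 1 be a (σ, δ)-hyperbolic time for x, i.e. for every 1 ≤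 k ≤ n: ∏_{j=n−k}^{n−1} ‖Df(f^j(x))^{−1}‖ ≤ σ^k and dist_δ(f^{n−k}(x), 𝒞) ≥ σ^{bk}. Then for every 1 ≤ j < n and every point y with dist(y, f^{n−j}(x)) ≤ 2δ_1·σ^{j/2}, one has y ∉ 𝒞 and ‖Df(y)^{−1}‖ ≤ σ^{−1/2}·‖Df(f^{n−j}(x))^{−1}‖. -/
set_option maxHeartbeats 1000000

lemma norm_symm_pos' {d : ℕ} (hd : 1 ≤ d)
    (e : EuclideanSpace ℝ (Fin d) ≃L[ℝ] EuclideanSpace ℝ (Fin d)) :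
    0 < ‖(e.symm : EuclideanSpace ℝ (Fin d) →L[ℝ] EuclideanSpace ℝ (Fin d))‖ := by
  haveI : Nonempty (Fin d) := ⟨⟨0, hd⟩⟩
  obtain ⟨v, hv⟩ := exists_ne (0 : EuclideanSpace ℝ (Fin d))
  have h1 : e.symm v ≠ 0 := by
    intro h
    apply hv
    have := congrArg e h
    simpa using this
  have h2 : 0 < ‖e.symm v‖ := norm_pos_iff.mpr h1
  have h3 : 0 < ‖v‖ := norm_pos_iff.mpr hv
  have h4 : ‖e.symm v‖ ≤ ‖(e.symm : EuclideanSpace ℝ (Fin d) →L[ℝ] EuclideanSpace ℝ (Fin d))‖ * ‖v‖ :=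
    (e.symm : EuclideanSpace ℝ (Fin d) →L[ℝ] EuclideanSpace ℝ (Fin d)).le_opNorm v
  nlinarith



/-- The `δ`-truncated distance to a set `C`: it equals `dist(x, C)` if `dist(x, C) < δ`,
and `1` otherwise. -/
noncomputable def truncDist {d : ℕ} (δ : ℝ) (C : Set (EuclideanSpace ℝ (Fin d)))
    (x : EuclideanSpace ℝ (Fin d)) : ℝ :=
  if Metric.infDist x C < δ then Metric.infDist x C else 1

/-- Lemma on hyperbolic times: if `n` is a `(σ, δ)`-hyperbolic time for `x`, then for
`1 ≤ j < n` and any `y` with `dist (y, f^{n-j} x) ≤ 2 δ₁ σ^{j/2}` one has `y ∉ C` and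
`‖Df(y)⁻¹‖ ≤ σ^{-1/2} ‖Df(f^{n-j} x)⁻¹‖`, provided `4δ₁ < δ`,
`4 B δ₁ < δ^β |log σ|` and the Lipschitz-type condition (s₂) holds. -/
theorem hyperbolic_time_lemma (d : ℕ) (hd : 1 ≤ d)
    (C : Set (EuclideanSpace ℝ (Fin d))) (hC : IsClosed C)
    (f : EuclideanSpace ℝ (Fin d) → EuclideanSpace ℝ (Fin d))
    (Df : EuclideanSpace ℝ (Fin d) →
      (EuclideanSpace ℝ (Fin d) ≃L[ℝ] EuclideanSpace ℝ (Fin d)))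
    (hDf : ∀ x ∉ C, HasFDerivAt f
      ((Df x : EuclideanSpace ℝ (Fin d) →L[ℝ] EuclideanSpace ℝ (Fin d))) x)
    (B β b σ δ δ₁ : ℝ)
    (hB : 1 < B) (hβ : 0 < β) (hb : 0 < b) (h2b : 2 * b < min 1 (1 / β))
    (hσ0 : 0 < σ) (hσ1 : σ < 1) (hδ0 : 0 < δ) (hδle : δ ≤ 1)
    (hδ₁0 : 0 < δ₁) (hδ₁a : 4 * δ₁ < δ) (hδ₁b : 4 * B * δ₁ < δ ^ β * |Real.log σ|)
    (hs2 : ∀ x ∉ C, ∀ y ∉ C, dist x y < Metric.infDist x C / 2 →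
      |Real.log ‖((Df x).symm : EuclideanSpace ℝ (Fin d) →L[ℝ] EuclideanSpace ℝ (Fin d))‖ -
        Real.log ‖((Df y).symm : EuclideanSpace ℝ (Fin d) →L[ℝ] EuclideanSpace ℝ (Fin d))‖| ≤
        B / Metric.infDist x C ^ β * dist x y)
    (x : EuclideanSpace ℝ (Fin d)) (n : ℕ) (hn : 1 ≤ n)
    (hhyp : ∀ k, 1 ≤ k → k ≤ n →
      (∏ j ∈ Finset.Ico (n - k) n,
        ‖((Df (f^[j] x)).symm :
          EuclideanSpace ℝ (Fin d) →L[ℝ] EuclideanSpace ℝ (Fin d))‖) ≤ σ ^ k ∧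
      σ ^ (b * (k : ℝ)) ≤ truncDist δ C (f^[n - k] x)) :
    ∀ j, 1 ≤ j → j < n → ∀ y, dist y (f^[n - j] x) ≤ 2 * δ₁ * σ ^ ((j : ℝ) / 2) →
      y ∉ C ∧
      ‖((Df y).symm : EuclideanSpace ℝ (Fin d) →L[ℝ] EuclideanSpace ℝ (Fin d))‖ ≤
        σ ^ (-(1 : ℝ) / 2) *
        ‖((Df (f^[n - j] x)).symm :
          EuclideanSpace ℝ (Fin d) →L[ℝ] EuclideanSpace ℝ (Fin d))‖ := by
  intro j hj1 hjn y hy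
  set z := f^[n - j] x with hzdef
  obtain ⟨-, htd⟩ := hhyp j hj1 hjn.le
  set D := Metric.infDist z C with hDdef
  have hj1' : (1 : ℝ) ≤ (j : ℝ) := by exact_mod_cast hj1
  have hσbj_pos : 0 < σ ^ (b * (j : ℝ)) := Real.rpow_pos_of_pos hσ0 _
  have hσbj_le1 : σ ^ (b * (j : ℝ)) ≤ 1 :=
    Real.rpow_le_one hσ0.le hσ1.le (by positivity)
  have hσj2_pos : 0 < σ ^ ((j : ℝ) / 2) := Real.rpow_pos_of_pos hσ0 _
  -- lower bound on D
  have hDlb : δ * σ ^ (b * (j : ℝ)) ≤ D := by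
    unfold truncDist at htd
    split_ifs at htd with h
    · nlinarith
    · push_neg at h; nlinarith
  have hD0 : 0 < D := lt_of_lt_of_le (by positivity) hDlb
  have hzC : z ∉ C := by
    intro h
    have := Metric.infDist_zero_of_mem h
    rw [← hDdef] at this
    linarith
  -- b < 1/2 and b*β < 1/2
  have hb2 : b < 1 / 2 := by
    have := min_le_left (1 : ℝ) (1 / β); linarith
  have hbβ : b * β < 1 / 2 := by
    have h1 : 2 * b < 1 / β := lt_of_lt_of_le h2b (min_le_right _ _)
    have h2 : (2 * b) * β < (1 / β) * β := mul_lt_mul_of_pos_right h1 hβ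
    rw [one_div, inv_mul_cancel₀ hβ.ne'] at h2
    linarith
  have hmono : σ ^ ((j : ℝ) / 2) ≤ σ ^ (b * (j : ℝ)) :=
    Real.rpow_le_rpow_of_exponent_ge hσ0 hσ1.le (by nlinarith)
  -- dist z y < D/2
  have hdyz : dist z y ≤ 2 * δ₁ * σ ^ ((j : ℝ) / 2) := by rw [dist_comm]; exact hy
  have hdistlt : dist z y < D / 2 := by nlinarith
  have hyC : y ∉ C := by
    intro h
    have := Metric.infDist_le_dist_of_mem (x := z) h
    rw [← hDdef] at this
    linarith
  have hs := hs2 z hzC y hyC hdistlt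
  -- bound the RHS of hs2
  have hδβ : (0 : ℝ) < δ ^ β := Real.rpow_pos_of_pos hδ0 _
  have hpow : (δ * σ ^ (b * (j : ℝ))) ^ β = δ ^ β * σ ^ (b * (j : ℝ) * β) := by
    rw [Real.mul_rpow hδ0.le hσbj_pos.le, ← Real.rpow_mul hσ0.le]
  have hDβ : δ ^ β * σ ^ (b * (j : ℝ) * β) ≤ D ^ β := by
    rw [← hpow]
    exact Real.rpow_le_rpow (by positivity) hDlb hβ.le
  have hσbβ_pos : 0 < σ ^ (b * (j : ℝ) * β) := Real.rpow_pos_of_pos hσ0 _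
  have hB0 : (0 : ℝ) < B := by linarith
  have hdiv : B / D ^ β ≤ B / (δ ^ β * σ ^ (b * (j : ℝ) * β)) :=
    div_le_div_of_nonneg_left hB0.le (by positivity) hDβ
  have hlogσ : |Real.log σ| = -Real.log σ := abs_of_neg (Real.log_neg hσ0 hσ1)
  have hlogσ_pos : 0 < -Real.log σ := by
    have := Real.log_neg hσ0 hσ1; linarith
  have key : B / D ^ β * dist z y ≤ -Real.log σ / 2 := by
    have h1 : B / D ^ β * dist z y ≤
        B / (δ ^ β * σ ^ (b * (j : ℝ) * β)) * (2 * δ₁ * σ ^ ((j : ℝ) / 2)) := by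
      apply mul_le_mul hdiv hdyz dist_nonneg (by positivity)
    have heq : B / (δ ^ β * σ ^ (b * (j : ℝ) * β)) * (2 * δ₁ * σ ^ ((j : ℝ) / 2)) =
        2 * B * δ₁ / δ ^ β * σ ^ ((j : ℝ) / 2 - b * (j : ℝ) * β) := by
      rw [Real.rpow_sub hσ0]
      field_simp
    have hexp : σ ^ ((j : ℝ) / 2 - b * (j : ℝ) * β) ≤ 1 :=
      Real.rpow_le_one hσ0.le hσ1.le (by nlinarith)
    have h2 : 2 * B * δ₁ / δ ^ β * σ ^ ((j : ℝ) / 2 - b * (j : ℝ) * β) ≤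
        2 * B * δ₁ / δ ^ β := by
      have : 0 ≤ 2 * B * δ₁ / δ ^ β := by positivity
      nlinarith
    have h3 : 2 * B * δ₁ / δ ^ β ≤ -Real.log σ / 2 := by
      rw [hlogσ] at hδ₁b
      rw [div_le_div_iff₀ hδβ (by norm_num : (0:ℝ) < 2)]
      nlinarith
    calc B / D ^ β * dist z y ≤ _ := h1
      _ = _ := heq
      _ ≤ _ := h2
      _ ≤ _ := h3
  -- conclude
  refine ⟨hyC, ?_⟩
  set a := ‖((Df z).symm : EuclideanSpace ℝ (Fin d) →L[ℝ] EuclideanSpace ℝ (Fin d))‖ with ha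
  set bb := ‖((Df y).symm : EuclideanSpace ℝ (Fin d) →L[ℝ] EuclideanSpace ℝ (Fin d))‖ with hbb
  have ha0 : 0 < a := norm_symm_pos' hd _
  have hbb0 : 0 < bb := norm_symm_pos' hd _
  have hlog : Real.log bb - Real.log a ≤ -Real.log σ / 2 := by
    have := abs_le.mp hs
    linarith [this.1]
  have hX0 : 0 < σ ^ (-(1 : ℝ) / 2) * a := by positivity
  rw [← Real.log_le_log_iff hbb0 hX0]
  rw [Real.log_mul (by positivity) ha0.ne', Real.log_rpow hσ0]
  linarith
end
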